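/- arXiv:1107.5887 — 7 statements merged into one kernel-verified Lean document; each statement's English description precedes it below -/
import Mathlib

section
/- Let G : [0,∞) → [0,∞) be continuous with b := ∫₀^∞ t·G(t) dt < ∞, and let h : [0,∞) → ℝ be twice continuously differentiable with h''(r) = G(r)·h(r), h(0) = 0, h'(0) = 1. Then the limit α := lim_{r→∞} h(r)/r exists, is finite, equals lim_{r→∞} h'(r), and satisfies 1 + b ≤ α ≤ e^b. -/
open Set Filter MeasureTheory
open scoped Topology

/-- For the comparison ODE `h'' = G h`, `h 0 = 0`, `h' 0 = 1`, with `G` continuous,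
nonnegative, and `b = ∫₀^∞ t G(t) dt < ∞`, the limit `α = lim_{r→∞} h r / r` exists, is
finite, equals `lim h'`, and satisfies `1 + b ≤ α ≤ e^b`. -/
theorem stmt_1 (G h h' h'' : ℝ → ℝ) (b : ℝ)
    (hGcont : ContinuousOn G (Ici 0))
    (hGnonneg : ∀ r ∈ Ici (0:ℝ), 0 ≤ G r)
    (hGint : IntegrableOn (fun t => t * G t) (Ioi 0))
    (hb : b = ∫ t in Ioi (0:ℝ), t * G t)
    (hd1 : ∀ r ∈ Ici (0:ℝ), HasDerivWithinAt h (h' r) (Ici 0) r)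
    (hd2 : ∀ r ∈ Ici (0:ℝ), HasDerivWithinAt h' (h'' r) (Ici 0) r)
    (hcont : ContinuousOn h'' (Ici 0))
    (hode : ∀ r ∈ Ici (0:ℝ), h'' r = G r * h r)
    (h0 : h 0 = 0) (h'0 : h' 0 = 1) :
    ∃ α : ℝ, Tendsto (fun r => h r / r) atTop (nhds α) ∧
      Tendsto h' atTop (nhds α) ∧ 1 + b ≤ α ∧ α ≤ Real.exp b := by
  have hch : ContinuousOn h (Ici 0) := fun x hx => (hd1 x hx).continuousWithinAt
  have hch' : ContinuousOn h' (Ici 0) := fun x hx => (hd2 x hx).continuousWithinAt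
  have hdh : ∀ x : ℝ, 0 < x → HasDerivAt h (h' x) x := fun x hx =>
    (hd1 x hx.le).hasDerivAt (Ici_mem_nhds hx)
  have hdh' : ∀ x : ℝ, 0 < x → HasDerivAt h' (h'' x) x := fun x hx =>
    (hd2 x hx.le).hasDerivAt (Ici_mem_nhds hx)
  -- key bootstrap lemma on an interval where h is nonnegative
  have key : ∀ r₀ : ℝ, 0 ≤ r₀ → (∀ t ∈ Icc (0:ℝ) r₀, 0 ≤ h t) →
      (∀ t ∈ Icc (0:ℝ) r₀, 1 ≤ h' t) ∧ r₀ ≤ h r₀ := by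
    intro r₀ hr₀ hnn
    have hIcc : Icc (0:ℝ) r₀ ⊆ Ici 0 := Icc_subset_Ici_self
    have hmono' : MonotoneOn h' (Icc 0 r₀) := by
      apply monotoneOn_of_deriv_nonneg (convex_Icc 0 r₀) (hch'.mono hIcc)
      · intro x hx
        rw [interior_Icc] at hx
        exact (hdh' x hx.1).differentiableAt.differentiableWithinAt
      · intro x hx
        rw [interior_Icc] at hx
        rw [(hdh' x hx.1).deriv, hode x hx.1.le]
        exact mul_nonneg (hGnonneg x hx.1.le) (hnn x ⟨hx.1.le, hx.2.le⟩)
    have h'ge : ∀ t ∈ Icc (0:ℝ) r₀, 1 ≤ h' t := by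
      intro t ht
      have := hmono' ⟨le_refl 0, hr₀⟩ ht ht.1
      rwa [h'0] at this
    refine ⟨h'ge, ?_⟩
    have H : (1:ℝ) * (r₀ - 0) ≤ h r₀ - h 0 := by
      apply Convex.mul_sub_le_image_sub_of_le_deriv (convex_Icc 0 r₀) (hch.mono hIcc)
        ?_ ?_ 0 ⟨le_refl 0, hr₀⟩ r₀ ⟨hr₀, le_refl r₀⟩ hr₀
      · intro x hx
        rw [interior_Icc] at hx
        exact (hdh x hx.1).differentiableAt.differentiableWithinAt
      · intro x hx
        rw [interior_Icc] at hx
        rw [(hdh x hx.1).deriv]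
        exact h'ge x ⟨hx.1.le, hx.2.le⟩
    rw [h0] at H; linarith
  -- Step A : h is nonnegative on [0, ∞)
  have hpos : ∀ t : ℝ, 0 ≤ t → 0 ≤ h t := by
    by_contra hcon
    push_neg at hcon
    obtain ⟨x, hx0, hxneg⟩ := hcon
    set B : Set ℝ := {r | 0 ≤ r ∧ h r < 0} with hBdef
    have hBne : B.Nonempty := ⟨x, hx0, hxneg⟩
    have hBbd : BddBelow B := ⟨0, fun y hy => hy.1⟩
    -- positivity of h near 0 on the right
    have hslope : Tendsto (slope h 0) (𝓝[Ioi 0] 0) (𝓝 1) := by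
      have := hasDerivWithinAt_iff_tendsto_slope.mp (hd1 0 self_mem_Ici)
      rw [h'0] at this
      rwa [Ici_sdiff_left] at this
    have hev : ∀ᶠ t in 𝓝[Ioi (0:ℝ)] 0, 0 < slope h 0 t :=
      hslope.eventually (eventually_gt_nhds one_pos)
    obtain ⟨δ, hδpos, hδ⟩ : ∃ δ > 0, ∀ t : ℝ, 0 < t → t < δ → 0 < h t := by
      rw [eventually_nhdsWithin_iff] at hev
      obtain ⟨ε, hε, hεs⟩ := Metric.eventually_nhds_iff.mp hev
      refine ⟨ε, hε, fun t ht hts => ?_⟩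
      have hst := hεs (y := t) (by simpa [Real.dist_eq, abs_of_pos ht] using hts) ht
      have hse : slope h 0 t = h t / t := by
        rw [slope_def_field, h0]; ring_nf
      rw [hse] at hst
      by_contra hneg
      push_neg at hneg
      have : h t / t ≤ 0 := div_nonpos_of_nonpos_of_nonneg hneg ht.le
      linarith
    set r₀ := sInf B with hr₀def
    have hr₀δ : δ ≤ r₀ := by
      apply le_csInf hBne
      intro y hy
      by_contra hlt
      push_neg at hlt
      have hy0 : 0 < y := by
        rcases lt_or_eq_of_le hy.1 with h1 | h1
        · exact h1
        · exfalso; have h2 := hy.2; rw [← h1, h0] at h2; exact lt_irrefl 0 h2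
      exact absurd (hδ y hy0 hlt) (not_lt.mpr hy.2.le)
    have hr₀pos : 0 < r₀ := lt_of_lt_of_le hδpos hr₀δ
    have hbelow : ∀ t : ℝ, 0 ≤ t → t < r₀ → 0 ≤ h t := by
      intro t ht htlt
      by_contra hneg
      push_neg at hneg
      exact absurd (csInf_le hBbd ⟨ht, hneg⟩) (not_le.mpr htlt)
    have hr₀nonneg : 0 ≤ h r₀ := by
      by_contra hneg
      push_neg at hneg
      have hev2 : ∀ᶠ t in 𝓝[Ici 0] r₀, h t < 0 :=
        (hch r₀ hr₀pos.le).eventually (eventually_lt_nhds hneg)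
      rw [eventually_nhdsWithin_iff] at hev2
      obtain ⟨ε, hε, hεs⟩ := Metric.eventually_nhds_iff.mp hev2
      set t := max (r₀ - ε/2) (r₀/2) with htdef
      have ht0 : 0 ≤ t := le_trans (by positivity) (le_max_right _ _)
      have htlt : t < r₀ := max_lt (by linarith) (by linarith)
      have htd : dist t r₀ < ε := by
        rw [Real.dist_eq, abs_of_nonpos (by linarith)]
        have : r₀ - ε/2 ≤ t := le_max_left _ _
        linarith
      exact absurd (hεs htd ht0) (not_lt.mpr (hbelow t ht0 htlt))
    have hnnIcc : ∀ t ∈ Icc (0:ℝ) r₀, 0 ≤ h t := by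
      intro t ht
      rcases lt_or_eq_of_le ht.2 with h1 | h1
      · exact hbelow t ht.1 h1
      · rw [h1]; exact hr₀nonneg
    have hr₀h : r₀ ≤ h r₀ := (key r₀ hr₀pos.le hnnIcc).2
    have hhr₀pos : 0 < h r₀ := lt_of_lt_of_le hr₀pos hr₀h
    have hev3 : ∀ᶠ t in 𝓝[Ici 0] r₀, 0 < h t :=
      (hch r₀ hr₀pos.le).eventually (eventually_gt_nhds hhr₀pos)
    rw [eventually_nhdsWithin_iff] at hev3
    obtain ⟨ε, hε, hεs⟩ := Metric.eventually_nhds_iff.mp hev3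
    have : r₀ + ε ≤ r₀ := by
      apply le_csInf hBne
      intro y hy
      by_contra hlt
      push_neg at hlt
      have hyr₀ : r₀ ≤ y := csInf_le hBbd hy
      have hyd : dist y r₀ < ε := by
        rw [Real.dist_eq, abs_of_nonneg (by linarith)]; linarith
      exact absurd (hεs hyd hy.1) (not_lt.mpr hy.2.le)
    linarith
  -- global consequences
  have hnnIcc : ∀ r : ℝ, ∀ t ∈ Icc (0:ℝ) r, 0 ≤ h t := fun r t ht => hpos t ht.1
  have h'ge1 : ∀ t : ℝ, 0 ≤ t → 1 ≤ h' t := fun t ht =>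
    (key t ht (hnnIcc t)).1 t ⟨ht, le_refl t⟩
  have hge : ∀ r : ℝ, 0 ≤ r → r ≤ h r := fun r hr => (key r hr (hnnIcc r)).2
  have h'mono : MonotoneOn h' (Ici 0) := by
    apply monotoneOn_of_deriv_nonneg (convex_Ici 0) hch'
    · intro x hx
      rw [interior_Ici] at hx
      exact (hdh' x hx).differentiableAt.differentiableWithinAt
    · intro x hx
      rw [interior_Ici] at hx
      rw [(hdh' x hx).deriv, hode x (mem_Ici.mpr hx.le)]
      exact mul_nonneg (hGnonneg x (mem_Ici.mpr hx.le)) (hpos x hx.le)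
  -- h r ≤ r * h' r
  have hub : ∀ r : ℝ, 0 ≤ r → h r ≤ r * h' r := by
    intro r hr
    have H : h r - h 0 ≤ h' r * (r - 0) := by
      apply Convex.image_sub_le_mul_sub_of_deriv_le (convex_Icc 0 r)
        (hch.mono Icc_subset_Ici_self) ?_ ?_ 0 ⟨le_refl 0, hr⟩ r ⟨hr, le_refl r⟩ hr
      · intro x hx
        rw [interior_Icc] at hx
        exact (hdh x hx.1).differentiableAt.differentiableWithinAt
      · intro x hx
        rw [interior_Icc] at hx
        rw [(hdh x hx.1).deriv]
        exact h'mono hx.1.le (le_trans hx.1.le hx.2.le) hx.2.le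
    rw [h0] at H; nlinarith
  -- convexity inequality : h' s * (r - s) ≤ h r - h s
  have hconv : ∀ s r : ℝ, 0 ≤ s → s ≤ r → h' s * (r - s) ≤ h r - h s := by
    intro s r hs hsr
    have hsub : Icc s r ⊆ Ici 0 := fun y hy => le_trans hs hy.1
    apply Convex.mul_sub_le_image_sub_of_le_deriv (convex_Icc s r) (hch.mono hsub)
      ?_ ?_ s ⟨le_refl s, hsr⟩ r ⟨hsr, le_refl r⟩ hsr
    · intro x hx
      rw [interior_Icc] at hx
      exact (hdh x (lt_of_le_of_lt hs hx.1)).differentiableAt.differentiableWithinAt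
    · intro x hx
      rw [interior_Icc] at hx
      rw [(hdh x (lt_of_le_of_lt hs hx.1)).deriv]
      exact h'mono hs (le_trans hs hx.1.le) hx.1.le
  -- primitive of t * G t
  set f : ℝ → ℝ := fun t => t * G t with hfdef
  have hfc : ContinuousOn f (Ici 0) := continuousOn_id.mul hGcont
  set ψ : ℝ → ℝ := fun r => ∫ t in (0:ℝ)..r, f t with hψdef
  have hfint : ∀ r : ℝ, 0 ≤ r → IntervalIntegrable f volume 0 r := by
    intro r hr
    rw [intervalIntegrable_iff_integrableOn_Ioc_of_le hr]
    exact hGint.mono_set Ioc_subset_Ioi_self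
  have hψd : ∀ x : ℝ, 0 < x → HasDerivAt ψ (f x) x := by
    intro x hx
    apply intervalIntegral.integral_hasDerivAt_right (hfint x hx.le)
      ⟨Ioi 0, Ioi_mem_nhds hx, (hfc.mono Ioi_subset_Ici_self).aestronglyMeasurable measurableSet_Ioi⟩
    exact (hfc x hx.le).continuousAt (Ici_mem_nhds hx)
  have hψc : ContinuousOn ψ (Ici 0) := by
    intro x hx
    rcases lt_or_eq_of_le (mem_Ici.mp hx) with hx' | hx'
    · exact (hψd x hx').continuousAt.continuousWithinAt
    · rw [← hx']
      have : HasDerivWithinAt ψ (f 0) (Ici 0) 0 := by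
        apply intervalIntegral.integral_hasDerivWithinAt_right (hfint 0 le_rfl)
          ⟨Ioi 0, self_mem_nhdsWithin,
            (hfc.mono Ioi_subset_Ici_self).aestronglyMeasurable measurableSet_Ioi⟩
          ((hfc 0 self_mem_Ici).mono Ioi_subset_Ici_self)
      exact this.continuousWithinAt
  have hψ0 : ψ 0 = 0 := intervalIntegral.integral_same
  have hψle : ∀ r : ℝ, 0 ≤ r → ψ r ≤ b := by
    intro r hr
    rw [hψdef]
    simp only
    rw [intervalIntegral.integral_of_le hr, hb]
    apply setIntegral_mono_set hGint
    · filter_upwards [ae_restrict_mem measurableSet_Ioi] with t ht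
      exact mul_nonneg (le_of_lt ht) (hGnonneg t (mem_Ici.mpr (le_of_lt ht)))
    · exact HasSubset.Subset.eventuallyLE Ioc_subset_Ioi_self
  -- lower bound : 1 + ψ r ≤ h' r
  have hlower : ∀ r : ℝ, 0 ≤ r → 1 + ψ r ≤ h' r := by
    intro r hr
    have hm : MonotoneOn (fun r => h' r - ψ r) (Ici 0) := by
      apply monotoneOn_of_deriv_nonneg (convex_Ici 0) (hch'.sub hψc)
      · intro x hx
        rw [interior_Ici] at hx
        exact ((hdh' x hx).sub (hψd x hx)).differentiableAt.differentiableWithinAt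
      · intro x hx
        rw [interior_Ici] at hx
        rw [((hdh' x hx).sub (hψd x hx)).deriv, hode x (mem_Ici.mpr hx.le)]
        have : G x * h x - x * G x = G x * (h x - x) := by ring
        rw [this]
        exact mul_nonneg (hGnonneg x (mem_Ici.mpr hx.le)) (by linarith [hge x hx.le])
    have := hm (self_mem_Ici) hr hr
    simp only [h'0, hψ0] at this
    linarith
  -- upper bound : h' r ≤ exp b
  have h'pos : ∀ r : ℝ, 0 ≤ r → 0 < h' r := fun r hr => lt_of_lt_of_le one_pos (h'ge1 r hr)
  have hupper : ∀ r : ℝ, 0 ≤ r → h' r ≤ Real.exp b := by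
    intro r hr
    have hm : MonotoneOn (fun r => ψ r - Real.log (h' r)) (Ici 0) := by
      apply monotoneOn_of_deriv_nonneg (convex_Ici 0)
      · apply hψc.sub
        intro y hy
        exact (Real.continuousAt_log (ne_of_gt (h'pos y hy))).comp_continuousWithinAt (hch' y hy)
      · intro x hx
        rw [interior_Ici] at hx
        exact ((hψd x hx).sub ((hdh' x hx).log (ne_of_gt (h'pos x hx.le)))).differentiableAt.differentiableWithinAt
      · intro x hx
        rw [interior_Ici] at hx
        rw [HasDerivAt.deriv (f := fun r => ψ r - Real.log (h' r)) ((hψd x hx).sub ((hdh' x hx).log (ne_of_gt (h'pos x hx.le)))), hode x (mem_Ici.mpr hx.le)]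
        have hd : h x / h' x ≤ x := by
          rw [div_le_iff₀ (h'pos x hx.le)]
          exact hub x hx.le
        have : x * G x - G x * h x / h' x = G x * (x - h x / h' x) := by ring
        rw [this]
        exact mul_nonneg (hGnonneg x (mem_Ici.mpr hx.le)) (by linarith)
    have := hm (self_mem_Ici) hr hr
    simp only [h'0, hψ0, Real.log_one] at this
    have hlog : Real.log (h' r) ≤ b := by
      have := hψle r hr
      linarith
    exact (Real.log_le_iff_le_exp (h'pos r hr)).mp hlog
  -- construct the limit
  set g : ℝ → ℝ := fun r => h' (max r 0) with hgdef
  have hgmono : Monotone g := fun a c hac =>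
    h'mono (le_max_right a 0) (le_max_right c 0) (max_le_max hac (le_refl 0))
  have hgbdd : BddAbove (range g) := by
    refine ⟨Real.exp b, ?_⟩
    rintro _ ⟨r, rfl⟩
    exact hupper (max r 0) (le_max_right r 0)
  set α := ⨆ r, g r with hαdef
  have hgt : Tendsto g atTop (𝓝 α) := tendsto_atTop_ciSup hgmono hgbdd
  have hEq : g =ᶠ[atTop] h' := by
    filter_upwards [eventually_ge_atTop (0:ℝ)] with r hr
    rw [hgdef]; simp [max_eq_left hr]
  have h't : Tendsto h' atTop (𝓝 α) := hgt.congr' hEq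
  have h'leα : ∀ r : ℝ, 0 ≤ r → h' r ≤ α := by
    intro r hr
    have h2 : g r ≤ α := by rw [hαdef]; exact le_ciSup hgbdd r
    simpa [hgdef, max_eq_left hr] using h2
  have hαexp : α ≤ Real.exp b :=
    ciSup_le fun r => hupper (max r 0) (le_max_right r 0)
  have hψt : Tendsto ψ atTop (𝓝 b) := by
    rw [hb]
    exact intervalIntegral_tendsto_integral_Ioi 0 hGint tendsto_id
  have h1b : 1 + b ≤ α := by
    have ht2 : Tendsto (fun r => h' r - ψ r) atTop (𝓝 (α - b)) := h't.sub hψt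
    have : 1 ≤ α - b := by
      apply ge_of_tendsto ht2
      filter_upwards [eventually_ge_atTop (0:ℝ)] with r hr
      linarith [hlower r hr]
    linarith
  -- the limit of h r / r
  have hfinal : Tendsto (fun r => h r / r) atTop (𝓝 α) := by
    rw [tendsto_order]
    constructor
    · intro a ha
      obtain ⟨s, hs⟩ := exists_lt_of_lt_ciSup ha
      set s' := max s 0 with hs'def
      have hs'0 : 0 ≤ s' := le_max_right s 0
      have has' : a < h' s' := hs
      have htend : Tendsto (fun r : ℝ => h' s' * (1 - s' / r)) atTop (𝓝 (h' s')) := by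
        have h1 : Tendsto (fun r : ℝ => s' / r) atTop (𝓝 0) :=
          tendsto_const_nhds.div_atTop tendsto_id
        have := (tendsto_const_nhds (x := h' s') (f := atTop)).mul
          ((tendsto_const_nhds (x := (1:ℝ)) (f := atTop)).sub h1)
        simpa using this
      have hev : ∀ᶠ r in atTop, a < h' s' * (1 - s' / r) :=
        htend.eventually (eventually_gt_nhds has')
      filter_upwards [hev, eventually_ge_atTop (max s' 1)] with r h1 h2
      have hrs' : s' ≤ r := le_trans (le_max_left _ _) h2
      have hr1 : (1:ℝ) ≤ r := le_trans (le_max_right _ _) h2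
      have hrpos : (0:ℝ) < r := lt_of_lt_of_le one_pos hr1
      have heq : h' s' * (1 - s' / r) = h' s' * (r - s') / r := by
        field_simp
      have hC : h' s' * (r - s') ≤ h r := by
        have := hconv s' r hs'0 hrs'
        linarith [hpos s' hs'0]
      have : h' s' * (1 - s' / r) ≤ h r / r := by
        rw [heq]
        exact (div_le_div_iff_of_pos_right hrpos).mpr hC
      linarith
    · intro a ha
      filter_upwards [eventually_ge_atTop (1:ℝ)] with r hr
      have hrpos : (0:ℝ) < r := lt_of_lt_of_le one_pos hr
      have : h r / r ≤ h' r := by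
        rw [div_le_iff₀ hrpos]
        nlinarith [hub r hrpos.le]
      exact lt_of_le_of_lt (le_trans this (h'leα r hrpos.le)) ha
  exact ⟨α, hfinal, h't, h1b, hαexp⟩
end

section
/- Let n ≥ 1 be a natural number, q > 1 a real number with n·(q−1) > q. Let (X,d) be a metric space, o ∈ X, and μ a Borel measure on X such that there is a constant C with μ(B(o,r)) ≤ C·rⁿ for all r > 0 and such that lim_{r→∞} μ(B(o,r))/rⁿ = ν. Then lim_{λ→∞} ∫_X λ^{n(q−1)} · (λ^q + d(o,x)^q)^{−n} dμ(x) = ν · n·q·∫₀^∞ ρ^{n+q−1}·(1+ρ^q)^{−(n+1)} dρ. -/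
open Set Filter MeasureTheory

open Topology

noncomputable def wfun (n : ℕ) (q : ℝ) : ℝ → ℝ :=
  fun ρ => ((n : ℝ) * q) * (ρ ^ (q - 1) * (1 + ρ ^ q) ^ (-((n : ℝ) + 1)))

lemma wfun_nonneg (n : ℕ) {q : ℝ} (hq : 0 ≤ q) {ρ : ℝ} (hρ : 0 ≤ ρ) : 0 ≤ wfun n q ρ := by
  unfold wfun
  have h1 : (0:ℝ) ≤ ρ ^ (q-1) := Real.rpow_nonneg hρ _
  have h2 : (0:ℝ) ≤ (1 + ρ ^ q) ^ (-((n:ℝ)+1)) :=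
    Real.rpow_nonneg (by nlinarith [Real.rpow_nonneg hρ q]) _
  exact mul_nonneg (mul_nonneg (Nat.cast_nonneg n) hq) (mul_nonneg h1 h2)

lemma wfun_measurable (n : ℕ) (q : ℝ) : Measurable (wfun n q) := by
  unfold wfun
  exact measurable_const.mul ((measurable_id.pow measurable_const).mul
    ((measurable_const.add (measurable_id.pow measurable_const)).pow measurable_const))

lemma wfun_hasDerivAt (n : ℕ) (q : ℝ) {x : ℝ} (hx : 0 < x) :
    HasDerivAt (fun ρ : ℝ => -((1 + ρ ^ q) ^ (-(n:ℝ)))) (wfun n q x) x := by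
  have h1 : HasDerivAt (fun ρ : ℝ => ρ ^ q) (q * x ^ (q - 1)) x :=
    Real.hasDerivAt_rpow_const (Or.inl hx.ne')
  have h2 : HasDerivAt (fun ρ : ℝ => 1 + ρ ^ q) (q * x ^ (q - 1)) x := h1.const_add 1
  have hpos : (0:ℝ) < 1 + x ^ q := by nlinarith [Real.rpow_nonneg hx.le q]
  have h3 : HasDerivAt (fun y : ℝ => y ^ (-(n:ℝ)))
      (-(n:ℝ) * (1 + x ^ q) ^ (-(n:ℝ) - 1)) (1 + x ^ q) :=
    Real.hasDerivAt_rpow_const (Or.inl hpos.ne')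
  have h4 := (h3.comp x h2).neg
  refine h4.congr_deriv ?_
  have he : (-(n:ℝ) - 1) = (-((n:ℝ)+1)) := by ring
  unfold wfun
  rw [he]
  ring

lemma wfun_tendsto (n : ℕ) (hn : 1 ≤ n) (q : ℝ) (hq : 1 < q) :
    Tendsto (fun ρ : ℝ => -((1 + ρ ^ q) ^ (-(n:ℝ)))) atTop (𝓝 0) := by
  have h1 : Tendsto (fun ρ : ℝ => 1 + ρ ^ q) atTop atTop :=
    tendsto_atTop_add_const_left _ 1 (tendsto_rpow_atTop (by linarith))
  have h2 : Tendsto (fun y : ℝ => y ^ (-(n:ℝ))) atTop (𝓝 0) :=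
    tendsto_rpow_neg_atTop (by exact_mod_cast Nat.pos_of_ne_zero (by omega))
  have := (h2.comp h1).neg
  simpa using this

lemma wfun_integral (n : ℕ) (hn : 1 ≤ n) (q : ℝ) (hq : 1 < q) {c : ℝ} (hc : 0 ≤ c) :
    IntegrableOn (wfun n q) (Ioi c) ∧
      ∫ ρ in Ioi c, wfun n q ρ = (1 + c ^ q) ^ (-(n:ℝ)) := by
  have hcont : ContinuousWithinAt (fun ρ : ℝ => -((1 + ρ ^ q) ^ (-(n:ℝ)))) (Ici c) c := by
    have hin : ContinuousAt (fun ρ : ℝ => 1 + ρ ^ q) c :=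
      continuousAt_const.add (Real.continuousAt_rpow_const c q (Or.inr (by linarith)))
    have hpos : (0:ℝ) < 1 + c ^ q := by nlinarith [Real.rpow_nonneg hc q]
    have hout : ContinuousAt (fun ρ : ℝ => (1 + ρ ^ q) ^ (-(n:ℝ))) c :=
      hin.rpow_const (Or.inl hpos.ne')
    exact hout.neg.continuousWithinAt
  have hderiv : ∀ x ∈ Ioi c, HasDerivAt (fun ρ : ℝ => -((1 + ρ ^ q) ^ (-(n:ℝ))))
      (wfun n q x) x := fun x hx => wfun_hasDerivAt n q (lt_of_le_of_lt hc hx)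
  have hpos' : ∀ x ∈ Ioi c, 0 ≤ wfun n q x := fun x hx =>
    wfun_nonneg n (by linarith) (le_of_lt (lt_of_le_of_lt hc hx))
  have htend := wfun_tendsto n hn q hq
  refine ⟨integrableOn_Ioi_deriv_of_nonneg hcont hderiv hpos' htend, ?_⟩
  rw [integral_Ioi_of_hasDerivAt_of_nonneg hcont hderiv hpos' htend]
  ring

lemma dom_integrable (n : ℕ) (hn : 1 ≤ n) (q : ℝ) (hq : 1 < q) :
    IntegrableOn (fun ρ : ℝ => ρ ^ ((n:ℝ) + q - 1) * (1 + ρ ^ q) ^ (-((n:ℝ) + 1)))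
      (Ioi (0:ℝ)) := by
  set h : ℝ → ℝ := fun ρ => ρ ^ ((n:ℝ) + q - 1) * (1 + ρ ^ q) ^ (-((n:ℝ) + 1)) with hh
  have hm : Measurable h :=
    (measurable_id.pow measurable_const).mul
      ((measurable_const.add (measurable_id.pow measurable_const)).pow measurable_const)
  have hnn : ∀ ρ : ℝ, 0 < ρ → 0 ≤ h ρ := by
    intro ρ hρ
    have h1 : (0:ℝ) ≤ ρ ^ ((n:ℝ) + q - 1) := Real.rpow_nonneg hρ.le _
    have h2 : (0:ℝ) ≤ (1 + ρ ^ q) ^ (-((n:ℝ)+1)) :=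
      Real.rpow_nonneg (by nlinarith [Real.rpow_nonneg hρ.le q]) _
    exact mul_nonneg h1 h2
  have hsplit : Ioi (0:ℝ) = Ioc (0:ℝ) 1 ∪ Ioi (1:ℝ) := (Ioc_union_Ioi_eq_Ioi zero_le_one).symm
  rw [hsplit]
  refine IntegrableOn.union ?_ ?_
  · -- bounded by 1 on Ioc 0 1
    refine Integrable.mono' (integrable_const (1:ℝ)) hm.aestronglyMeasurable.restrict ?_
    filter_upwards [ae_restrict_mem measurableSet_Ioc] with ρ hρ
    rw [Real.norm_eq_abs, abs_of_nonneg (hnn ρ hρ.1)]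
    have h1 : ρ ^ ((n:ℝ) + q - 1) ≤ 1 :=
      Real.rpow_le_one hρ.1.le hρ.2 (by linarith [(Nat.one_le_cast.2 hn : (1:ℝ) ≤ (n:ℝ))])
    have h2 : (1 + ρ ^ q) ^ (-((n:ℝ)+1)) ≤ 1 :=
      Real.rpow_le_one_of_one_le_of_nonpos
        (by nlinarith [Real.rpow_nonneg hρ.1.le q]) (by push_cast; nlinarith)
    have h2' : (0:ℝ) ≤ (1 + ρ ^ q) ^ (-((n:ℝ)+1)) :=
      Real.rpow_nonneg (by nlinarith [Real.rpow_nonneg hρ.1.le q]) _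
    calc h ρ ≤ 1 * 1 := by
          exact mul_le_mul h1 h2 h2' (by linarith [Real.rpow_nonneg hρ.1.le ((n:ℝ)+q-1)])
      _ = 1 := by ring
  · -- bounded by ρ ^ e on Ioi 1, e < -1
    set e : ℝ := (n:ℝ) + q - 1 + q * (-((n:ℝ) + 1)) with he
    have helt : e < -1 := by
      have hn1 : (1:ℝ) ≤ (n:ℝ) := by exact_mod_cast hn
      rw [he]; nlinarith
    refine Integrable.mono' (integrableOn_Ioi_rpow_of_lt helt zero_lt_one)
      hm.aestronglyMeasurable.restrict ?_
    filter_upwards [ae_restrict_mem measurableSet_Ioi] with ρ hρ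
    have hρ1 : (1:ℝ) < ρ := hρ
    have hρ0 : (0:ℝ) < ρ := by linarith
    rw [Real.norm_eq_abs, abs_of_nonneg (hnn ρ hρ0)]
    have hz : (-((n:ℝ)+1)) ≤ 0 := by
      have : (0:ℝ) ≤ (n:ℝ) := Nat.cast_nonneg n
      linarith
    have hb : (1 + ρ ^ q) ^ (-((n:ℝ)+1)) ≤ (ρ ^ q) ^ (-((n:ℝ)+1)) :=
      Real.rpow_le_rpow_of_nonpos (Real.rpow_pos_of_pos hρ0 q) (by linarith) hz
    have h1 : (0:ℝ) ≤ ρ ^ ((n:ℝ) + q - 1) := Real.rpow_nonneg hρ0.le _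
    calc h ρ ≤ ρ ^ ((n:ℝ) + q - 1) * (ρ ^ q) ^ (-((n:ℝ)+1)) :=
          mul_le_mul_of_nonneg_left hb h1
      _ = ρ ^ e := by
          rw [← Real.rpow_mul hρ0.le, ← Real.rpow_add hρ0, he]

lemma sigmaFinite_of_balls {X : Type*} [MetricSpace X] [MeasurableSpace X] [BorelSpace X]
    (μ : Measure X) (o : X) (n : ℕ) (C : ℝ)
    (hC : ∀ r > (0:ℝ), μ (Metric.ball o r) ≤ ENNReal.ofReal (C * r ^ n)) :
    SigmaFinite μ := by
  refine ⟨⟨⟨fun k => Metric.ball o (k+1), fun _ => trivial, fun k => ?_, ?_⟩⟩⟩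
  · exact lt_of_le_of_lt (hC _ (by positivity)) ENNReal.ofReal_lt_top
  · exact Metric.iUnion_ball_nat_succ o

lemma key_lintegral {X : Type*} [MetricSpace X] [MeasurableSpace X] [BorelSpace X]
    (μ : Measure X) (o : X) (n : ℕ) (hn : 1 ≤ n) (q : ℝ) (hq : 1 < q) (C : ℝ)
    (hC : ∀ r > (0:ℝ), μ (Metric.ball o r) ≤ ENNReal.ofReal (C * r ^ n))
    {lam : ℝ} (hlam : 0 < lam) :
    ∫⁻ x, ENNReal.ofReal ((1 + (dist o x / lam) ^ q) ^ (-(n:ℝ))) ∂μ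
      = ∫⁻ ρ in Ioi (0:ℝ), ENNReal.ofReal (wfun n q ρ) * μ (Metric.ball o (lam * ρ)) := by
  have : SigmaFinite μ := sigmaFinite_of_balls μ o n C hC
  set W : ℝ → ENNReal := fun ρ => ENNReal.ofReal (wfun n q ρ) with hW
  set S : Set (X × ℝ) := {p | dist o p.1 < lam * p.2} with hSdef
  have hS : MeasurableSet S :=
    measurableSet_lt (continuous_const.dist continuous_fst).measurable
      (continuous_const.mul continuous_snd).measurable
  set F : X → ℝ → ENNReal := fun x ρ => S.indicator (fun p => W p.2) (x, ρ) with hF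
  have step1 : ∀ x : X, ∫⁻ ρ in Ioi (0:ℝ), F x ρ
      = ENNReal.ofReal ((1 + (dist o x / lam) ^ q) ^ (-(n:ℝ))) := by
    intro x
    set c : ℝ := dist o x / lam with hcdef
    have hc : 0 ≤ c := div_nonneg dist_nonneg hlam.le
    have hFx : ∀ ρ, F x ρ = (Ioi c).indicator W ρ := by
      intro ρ
      by_cases h : c < ρ
      · have h1 : (x, ρ) ∈ S := by
          simp only [hSdef, mem_setOf_eq]
          rw [hcdef, div_lt_iff₀ hlam] at h
          linarith [h]
        rw [hF]
        simp only [indicator_of_mem h1, indicator_of_mem (mem_Ioi.mpr h)]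
      · have h1 : (x, ρ) ∉ S := by
          simp only [hSdef, mem_setOf_eq]
          rw [hcdef, div_lt_iff₀ hlam] at h
          intro hcon; exact h (by linarith)
        rw [hF]
        simp only [indicator_of_notMem h1, indicator_of_notMem (by simpa using h : ρ ∉ Ioi c)]
    calc ∫⁻ ρ in Ioi (0:ℝ), F x ρ = ∫⁻ ρ in Ioi (0:ℝ), (Ioi c).indicator W ρ := by
          exact lintegral_congr fun ρ => hFx ρ
      _ = ∫⁻ ρ in Ioi c, W ρ ∂(volume.restrict (Ioi 0)) :=
          lintegral_indicator measurableSet_Ioi _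
      _ = ∫⁻ ρ in Ioi c, W ρ := by
          rw [Measure.restrict_restrict measurableSet_Ioi,
            inter_eq_left.mpr (Ioi_subset_Ioi hc)]
      _ = ENNReal.ofReal (∫ ρ in Ioi c, wfun n q ρ) := by
          refine (ofReal_integral_eq_lintegral_ofReal (wfun_integral n hn q hq hc).1 ?_).symm
          filter_upwards [ae_restrict_mem measurableSet_Ioi] with ρ hρ
          exact wfun_nonneg n (by linarith) (le_of_lt (lt_of_le_of_lt hc hρ))
      _ = ENNReal.ofReal ((1 + c ^ q) ^ (-(n:ℝ))) := by
          rw [(wfun_integral n hn q hq hc).2]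
  have hmeas : AEMeasurable (Function.uncurry F) (μ.prod (volume.restrict (Ioi 0))) := by
    have : Function.uncurry F = S.indicator (fun p => W p.2) := by
      funext p; cases p; rfl
    rw [this]
    exact (((wfun_measurable n q).ennreal_ofReal.comp measurable_snd).indicator hS).aemeasurable
  calc ∫⁻ x, ENNReal.ofReal ((1 + (dist o x / lam) ^ q) ^ (-(n:ℝ))) ∂μ
      = ∫⁻ x, (∫⁻ ρ in Ioi (0:ℝ), F x ρ) ∂μ := by
        exact lintegral_congr fun x => (step1 x).symm
    _ = ∫⁻ ρ in Ioi (0:ℝ), ∫⁻ x, F x ρ ∂μ := lintegral_lintegral_swap hmeas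
    _ = ∫⁻ ρ in Ioi (0:ℝ), W ρ * μ (Metric.ball o (lam * ρ)) := by
        refine lintegral_congr fun ρ => ?_
        have hfx : ∀ x : X, F x ρ = (Metric.ball o (lam * ρ)).indicator (fun _ => W ρ) x := by
          intro x
          by_cases h : x ∈ Metric.ball o (lam * ρ)
          · have h1 : (x, ρ) ∈ S := by
              simp only [hSdef, mem_setOf_eq]
              rw [Metric.mem_ball, dist_comm] at h
              exact h
            rw [hF]; simp only [indicator_of_mem h1, indicator_of_mem h]
          · have h1 : (x, ρ) ∉ S := by
              simp only [hSdef, mem_setOf_eq]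
              rw [Metric.mem_ball, dist_comm] at h
              exact h
            rw [hF]; simp only [indicator_of_notMem h1, indicator_of_notMem h]
        rw [lintegral_congr hfx, lintegral_indicator_const measurableSet_ball]

lemma ball_meas_measurable {X : Type*} [MetricSpace X] [MeasurableSpace X] [BorelSpace X]
    (μ : Measure X) (o : X) (lam : ℝ) (hlam : 0 < lam) :
    Measurable (fun ρ : ℝ => (μ (Metric.ball o (lam * ρ))).toReal) := by
  have hmono : Monotone (fun ρ : ℝ => μ (Metric.ball o (lam * ρ))) := fun a b hab =>
    measure_mono (Metric.ball_subset_ball (by nlinarith))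
  exact hmono.measurable.ennreal_toReal

lemma key_id {X : Type*} [MetricSpace X] [MeasurableSpace X] [BorelSpace X]
    (μ : Measure X) (o : X) (n : ℕ) (hn : 1 ≤ n) (q : ℝ) (hq : 1 < q) (C : ℝ)
    (hC : ∀ r > (0:ℝ), μ (Metric.ball o r) ≤ ENNReal.ofReal (C * r ^ n))
    {lam : ℝ} (hlam : 0 < lam) :
    ∫ x, lam ^ ((n : ℝ) * (q - 1)) * (lam ^ q + dist o x ^ q) ^ (-(n : ℝ)) ∂μ
      = ∫ ρ in Ioi (0:ℝ),
          wfun n q ρ * (lam ^ (-(n:ℝ)) * (μ (Metric.ball o (lam * ρ))).toReal) := by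
  have hq0 : (0:ℝ) < q := by linarith
  have hlamq : (0:ℝ) < lam ^ q := Real.rpow_pos_of_pos hlam q
  -- pointwise identity
  have hpt : ∀ x : X, lam ^ ((n : ℝ) * (q - 1)) * (lam ^ q + dist o x ^ q) ^ (-(n : ℝ))
      = lam ^ (-(n:ℝ)) * (1 + (dist o x / lam) ^ q) ^ (-(n : ℝ)) := by
    intro x
    set d : ℝ := dist o x with hd
    have hd0 : 0 ≤ d := dist_nonneg
    have hA : (0:ℝ) < lam ^ q + d ^ q := by
      have := Real.rpow_nonneg hd0 q; linarith
    rw [Real.div_rpow hd0 hlam.le]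
    rw [show (1:ℝ) + d ^ q / lam ^ q = (lam ^ q + d ^ q) / lam ^ q by field_simp]
    rw [Real.div_rpow hA.le hlamq.le]
    rw [← Real.rpow_mul hlam.le q (-(n:ℝ))]
    rw [div_eq_mul_inv, ← Real.rpow_neg hlam.le (q * -(n:ℝ))]
    rw [mul_comm ((lam ^ q + d ^ q) ^ (-(n:ℝ))) (lam ^ (-(q * -(n:ℝ))))]
    rw [← mul_assoc, ← Real.rpow_add hlam]
    rw [show (-(n:ℝ) + -(q * -(n:ℝ))) = (n:ℝ) * (q - 1) by ring]
  have hmeas_g : Measurable fun x : X => (1 + (dist o x / lam) ^ q) ^ (-(n:ℝ)) := by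
    have h1 : Measurable fun x : X => dist o x := (continuous_const.dist continuous_id).measurable
    exact ((measurable_const.add ((h1.div_const lam).pow measurable_const)).pow measurable_const)
  have hg_nn : ∀ x : X, 0 ≤ (1 + (dist o x / lam) ^ q) ^ (-(n:ℝ)) := fun x =>
    Real.rpow_nonneg (by positivity) _
  have hlamn : (0:ℝ) ≤ lam ^ (-(n:ℝ)) := (Real.rpow_pos_of_pos hlam _).le
  -- LHS
  have lhs_eq : ∫ x, lam ^ ((n : ℝ) * (q - 1)) * (lam ^ q + dist o x ^ q) ^ (-(n : ℝ)) ∂μ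
      = (ENNReal.ofReal (lam ^ (-(n:ℝ))) *
          ∫⁻ ρ in Ioi (0:ℝ), ENNReal.ofReal (wfun n q ρ) *
            μ (Metric.ball o (lam * ρ))).toReal := by
    rw [integral_congr_ae (Filter.Eventually.of_forall hpt)]
    rw [integral_eq_lintegral_of_nonneg_ae
      (Filter.Eventually.of_forall fun x => mul_nonneg hlamn (hg_nn x))
      ((measurable_const.mul hmeas_g).aestronglyMeasurable)]
    congr 1
    simp_rw [ENNReal.ofReal_mul hlamn]
    rw [lintegral_const_mul' _ _ ENNReal.ofReal_ne_top]
    rw [key_lintegral μ o n hn q hq C hC hlam]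
  -- RHS
  have hball_fin : ∀ ρ : ℝ, ρ ∈ Ioi (0:ℝ) → μ (Metric.ball o (lam * ρ)) ≠ ⊤ := by
    intro ρ hρ
    exact (lt_of_le_of_lt (hC _ (mul_pos hlam hρ)) ENNReal.ofReal_lt_top).ne
  have rhs_eq : (∫ ρ in Ioi (0:ℝ),
        wfun n q ρ * (lam ^ (-(n:ℝ)) * (μ (Metric.ball o (lam * ρ))).toReal))
      = (ENNReal.ofReal (lam ^ (-(n:ℝ))) *
          ∫⁻ ρ in Ioi (0:ℝ), ENNReal.ofReal (wfun n q ρ) *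
            μ (Metric.ball o (lam * ρ))).toReal := by
    rw [integral_eq_lintegral_of_nonneg_ae ?nn ?meas]
    case nn =>
      filter_upwards [ae_restrict_mem measurableSet_Ioi] with ρ hρ
      exact mul_nonneg (wfun_nonneg n hq0.le (le_of_lt hρ))
        (mul_nonneg hlamn ENNReal.toReal_nonneg)
    case meas =>
      exact ((wfun_measurable n q).mul
        (measurable_const.mul (ball_meas_measurable μ o lam hlam))).aestronglyMeasurable
    congr 1
    rw [← lintegral_const_mul' _ _ (ENNReal.ofReal_ne_top (r := lam ^ (-(n:ℝ))))]
    refine lintegral_congr_ae ?_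
    filter_upwards [ae_restrict_mem measurableSet_Ioi] with ρ hρ
    rw [ENNReal.ofReal_mul (wfun_nonneg n hq0.le (le_of_lt hρ)),
      ENNReal.ofReal_mul hlamn, ENNReal.ofReal_toReal (hball_fin ρ hρ)]
    ring
  rw [lhs_eq, rhs_eq]

/-- If `μ (B(o,r)) ≤ C rⁿ` and `μ (B(o,r))/rⁿ → ν`, then
`∫ λ^{n(q-1)} (λ^q + d(o,x)^q)^{-n} dμ → ν · n q ∫₀^∞ ρ^{n+q-1} (1+ρ^q)^{-(n+1)} dρ`
as `λ → ∞`. -/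
theorem stmt_4 {X : Type*} [MetricSpace X] [MeasurableSpace X] [BorelSpace X]
    (μ : Measure X) (o : X) (n : ℕ) (hn : 1 ≤ n) (q : ℝ) (hq : 1 < q)
    (hnq : (n : ℝ) * (q - 1) > q) (C ν : ℝ)
    (hC : ∀ r > (0:ℝ), μ (Metric.ball o r) ≤ ENNReal.ofReal (C * r ^ n))
    (hν : Tendsto (fun r => (μ (Metric.ball o r)).toReal / r ^ n) atTop (nhds ν)) :
    Tendsto
      (fun lam : ℝ =>
        ∫ x, lam ^ ((n : ℝ) * (q - 1)) * (lam ^ q + dist o x ^ q) ^ (-(n : ℝ)) ∂μ)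
      atTop
      (nhds (ν * ((n : ℝ) * q *
        ∫ ρ in Ioi (0:ℝ), ρ ^ ((n : ℝ) + q - 1) * (1 + ρ ^ q) ^ (-((n : ℝ) + 1))))) := by
  have hq0 : (0:ℝ) ≤ q := by linarith
  set C' : ℝ := max C 0 with hC'
  set φ : ℝ → ℝ → ℝ := fun lam ρ =>
    wfun n q ρ * (lam ^ (-(n:ℝ)) * (μ (Metric.ball o (lam * ρ))).toReal) with hφ
  set f : ℝ → ℝ := fun ρ => wfun n q ρ * (ν * ρ ^ n) with hf
  -- rpow power juggling
  have hrw : ∀ ρ : ℝ, 0 < ρ → ρ ^ ((n:ℝ) + q - 1) = ρ ^ (q - 1) * ρ ^ n := by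
    intro ρ hρ
    rw [← Real.rpow_natCast ρ n, ← Real.rpow_add hρ]
    congr 1; ring
  -- the main convergence via dominated convergence
  have main : Tendsto (fun lam : ℝ => ∫ ρ in Ioi (0:ℝ), φ lam ρ) atTop
      (𝓝 (∫ ρ in Ioi (0:ℝ), f ρ)) := by
    apply tendsto_integral_filter_of_dominated_convergence
      (bound := fun ρ => wfun n q ρ * (C' * ρ ^ n))
    · -- measurability
      filter_upwards [eventually_gt_atTop (0:ℝ)] with lam hlam
      exact ((wfun_measurable n q).mul
        (measurable_const.mul (ball_meas_measurable μ o lam hlam))).aestronglyMeasurable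
    · -- bound
      filter_upwards [eventually_gt_atTop (0:ℝ)] with lam hlam
      filter_upwards [ae_restrict_mem measurableSet_Ioi] with ρ hρ
      have hρ0 : (0:ℝ) < ρ := hρ
      have hw : 0 ≤ wfun n q ρ := wfun_nonneg n hq0 hρ0.le
      have hl : lam ^ (-(n:ℝ)) = (lam ^ n)⁻¹ := by
        rw [Real.rpow_neg hlam.le, Real.rpow_natCast]
      have hln : (0:ℝ) < lam ^ n := pow_pos hlam n
      have hb1 : (μ (Metric.ball o (lam * ρ))).toReal ≤ C' * (lam * ρ) ^ n := by
        have h1 : μ (Metric.ball o (lam * ρ)) ≤ ENNReal.ofReal (C' * (lam * ρ) ^ n) := by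
          refine le_trans (hC _ (mul_pos hlam hρ0)) (ENNReal.ofReal_le_ofReal ?_)
          exact mul_le_mul_of_nonneg_right (le_max_left C 0) (by positivity)
        calc (μ (Metric.ball o (lam * ρ))).toReal
            ≤ (ENNReal.ofReal (C' * (lam * ρ) ^ n)).toReal :=
              ENNReal.toReal_mono ENNReal.ofReal_ne_top h1
          _ = C' * (lam * ρ) ^ n := ENNReal.toReal_ofReal (by positivity)
      have habs : |φ lam ρ| = φ lam ρ := abs_of_nonneg (by
        refine mul_nonneg hw (mul_nonneg ?_ ENNReal.toReal_nonneg)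
        rw [hl]; positivity)
      rw [Real.norm_eq_abs, habs]
      calc φ lam ρ ≤ wfun n q ρ * (lam ^ (-(n:ℝ)) * (C' * (lam * ρ) ^ n)) := by
            refine mul_le_mul_of_nonneg_left (mul_le_mul_of_nonneg_left hb1 ?_) hw
            rw [hl]; positivity
        _ = wfun n q ρ * (C' * ρ ^ n) := by
            rw [hl, mul_pow]; field_simp
    · -- integrable bound
      have h1 : IntegrableOn
          (fun ρ : ℝ => ((n:ℝ) * q * C') * (ρ ^ ((n:ℝ) + q - 1) * (1 + ρ ^ q) ^ (-((n:ℝ) + 1))))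
          (Ioi (0:ℝ)) := (dom_integrable n hn q hq).const_mul ((n:ℝ) * q * C')
      refine h1.congr_fun ?_ measurableSet_Ioi
      intro ρ hρ
      have hρ0 : (0:ℝ) < ρ := hρ
      simp only [wfun]
      rw [hrw ρ hρ0]
      ring
    · -- pointwise limit
      filter_upwards [ae_restrict_mem measurableSet_Ioi] with ρ hρ
      have hρ0 : (0:ℝ) < ρ := hρ
      have h1 : Tendsto (fun lam : ℝ => lam * ρ) atTop atTop :=
        tendsto_id.atTop_mul_const hρ0
      have h2 : Tendsto (fun lam : ℝ =>
          (μ (Metric.ball o (lam * ρ))).toReal / (lam * ρ) ^ n) atTop (𝓝 ν) := hν.comp h1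
      have h3 := (h2.mul_const ((ρ:ℝ) ^ n)).const_mul (wfun n q ρ)
      refine h3.congr' ?_
      filter_upwards [eventually_gt_atTop (0:ℝ)] with lam hlam
      have hl : lam ^ (-(n:ℝ)) = (lam ^ n)⁻¹ := by
        rw [Real.rpow_neg hlam.le, Real.rpow_natCast]
      have hln : (lam:ℝ) ^ n ≠ 0 := (pow_pos hlam n).ne'
      have hρn : (ρ:ℝ) ^ n ≠ 0 := (pow_pos hρ0 n).ne'
      simp only [hφ, hl, mul_pow]
      field_simp
  -- identify the limit
  have hL : ∫ ρ in Ioi (0:ℝ), f ρ = ν * ((n : ℝ) * q *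
      ∫ ρ in Ioi (0:ℝ), ρ ^ ((n : ℝ) + q - 1) * (1 + ρ ^ q) ^ (-((n : ℝ) + 1))) := by
    rw [← integral_const_mul, ← integral_const_mul]
    refine setIntegral_congr_fun measurableSet_Ioi ?_
    intro ρ hρ
    have hρ0 : (0:ℝ) < ρ := hρ
    simp only [hf, wfun]
    rw [hrw ρ hρ0]
    ring
  rw [← hL]
  refine main.congr' ?_
  filter_upwards [eventually_gt_atTop (0:ℝ)] with lam hlam
  exact (key_id μ o n hn q hq C hC hlam).symm
end

section
/- Let n ≥ 2 be a natural number and p ∈ (1,n) a real number, with q = p/(p−1). Let (X,d) be a metric space, o ∈ X, and μ a Borel measure on X such that there is a constant C with μ(B(o,r)) ≤ C·rⁿ for all r > 0 and such that lim_{r→∞} μ(B(o,r))/rⁿ = ν. Then lim_{λ→∞} λ^{(q−1)(n−p)} · ∫_X d(o,x)^{q} · (λ^q + d(o,x)^q)^{−n} dμ(x) = ν · n·∫₀^∞ ρ^{n+q−1}·(1+ρ^q)^{−n} dρ. -/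
open Set Filter MeasureTheory
open Topology

namespace Stmt5Aux

noncomputable def gg (n : ℕ) (q : ℝ) (t : ℝ) : ℝ := t ^ q * (1 + t ^ q) ^ (-(n : ℝ))

noncomputable def gg' (n : ℕ) (q : ℝ) (s : ℝ) : ℝ :=
  q * s ^ (q - 1) * (1 + s ^ q) ^ (-(n : ℝ)) -
    (n : ℝ) * q * (s ^ (q - 1) * s ^ q) * (1 + s ^ q) ^ (-(n : ℝ) - 1)

lemma measurable_gg' (n : ℕ) (q : ℝ) : Measurable (gg' n q) := by
  unfold gg'
  exact ((measurable_const.mul (measurable_id'.pow_const (q - 1))).mul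
      ((measurable_const.add (measurable_id'.pow_const q)).pow_const (-(n : ℝ)))).sub
    ((measurable_const.mul ((measurable_id'.pow_const (q - 1)).mul
      (measurable_id'.pow_const q))).mul
      ((measurable_const.add (measurable_id'.pow_const q)).pow_const (-(n : ℝ) - 1)))

lemma hasDerivAt_gg (n : ℕ) {q : ℝ} (hq1 : 1 < q) {s : ℝ} (hs : 0 < s) :
    HasDerivAt (gg n q) (gg' n q s) s := by
  have h1 : HasDerivAt (fun t : ℝ => t ^ q) (q * s ^ (q - 1)) s :=
    Real.hasDerivAt_rpow_const (Or.inl hs.ne')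
  have hbase : (0:ℝ) < 1 + s ^ q := by positivity
  have h2 : HasDerivAt (fun t : ℝ => 1 + t ^ q) (q * s ^ (q - 1)) s := h1.const_add 1
  have h3 : HasDerivAt (fun t : ℝ => (1 + t ^ q) ^ (-(n:ℝ)))
      (q * s ^ (q - 1) * (-(n:ℝ)) * (1 + s ^ q) ^ (-(n:ℝ) - 1)) s :=
    h2.rpow_const (Or.inl hbase.ne')
  have h4 : HasDerivAt (fun t : ℝ => t ^ q * (1 + t ^ q) ^ (-(n:ℝ))) _ s := h1.mul h3
  unfold gg gg'
  convert h4 using 1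
  ring

lemma continuousAt_gg (n : ℕ) {q : ℝ} (hq0 : 0 < q) {t : ℝ} (ht : 0 ≤ t) :
    ContinuousAt (gg n q) t := by
  have h1 : Continuous fun t : ℝ => t ^ q := Real.continuous_rpow_const hq0.le
  have h2 : (1 : ℝ) + t ^ q ≠ 0 := by
    have := Real.rpow_nonneg ht q
    positivity
  exact h1.continuousAt.mul
    (((continuous_const.add h1).continuousAt).rpow_const (Or.inl h2))

lemma tendsto_aux {q : ℝ} (hq0 : 0 < q) {A B : ℝ} (hB : 0 ≤ B) (hAB : A - q * B < 0) :
    Tendsto (fun t : ℝ => t ^ A * (1 + t ^ q) ^ (-B)) atTop (𝓝 0) := by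
  have h0 : Tendsto (fun t : ℝ => t ^ (A - q * B)) atTop (𝓝 0) := by
    have := tendsto_rpow_neg_atTop (y := q * B - A) (by linarith)
    simpa [neg_sub] using this
  refine squeeze_zero' ?_ ?_ h0
  · filter_upwards [eventually_gt_atTop (0:ℝ)] with t ht
    have := Real.rpow_nonneg ht.le q
    positivity
  · filter_upwards [eventually_gt_atTop (0:ℝ)] with t ht
    have hpos : (0:ℝ) < t ^ q := Real.rpow_pos_of_pos ht q
    have h1 : (1 + t ^ q) ^ (-B) ≤ (t ^ q) ^ (-B) :=
      Real.rpow_le_rpow_of_nonpos hpos (by linarith) (neg_nonpos.2 hB)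
    calc t ^ A * (1 + t ^ q) ^ (-B) ≤ t ^ A * (t ^ q) ^ (-B) :=
          mul_le_mul_of_nonneg_left h1 (Real.rpow_nonneg ht.le A)
      _ = t ^ (A - q * B) := by
          rw [← Real.rpow_mul ht.le, ← Real.rpow_add ht]
          ring_nf

lemma intCore {q a b : ℝ} (hq0 : 0 < q) (ha : -1 < a) (hb : 0 ≤ b) (hab : a - q * b < -1) :
    IntegrableOn (fun s : ℝ => s ^ a * (1 + s ^ q) ^ (-b)) (Ioi (0:ℝ)) := by
  have hmeas : Measurable (fun s : ℝ => s ^ a * (1 + s ^ q) ^ (-b)) :=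
    (measurable_id'.pow_const a).mul
      ((measurable_const.add (measurable_id'.pow_const q)).pow_const (-b))
  have h1 : IntegrableOn (fun s : ℝ => s ^ a * (1 + s ^ q) ^ (-b)) (Ioc (0:ℝ) 1) := by
    have base : IntegrableOn (fun s : ℝ => s ^ a) (Ioc (0:ℝ) 1) := by
      have := intervalIntegral.intervalIntegrable_rpow' (a := (0:ℝ)) (b := 1) ha
      rwa [intervalIntegrable_iff_integrableOn_Ioc_of_le zero_le_one] at this
    refine base.integrable.mono hmeas.aestronglyMeasurable ?_
    rw [ae_restrict_iff' measurableSet_Ioc]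
    refine ae_of_all _ fun s hs => ?_
    have hs0 : (0:ℝ) < s := hs.1
    have hq1 : (1:ℝ) ≤ 1 + s ^ q := by
      have := Real.rpow_nonneg hs0.le q; linarith
    have hle : (1 + s ^ q) ^ (-b) ≤ 1 :=
      Real.rpow_le_one_of_one_le_of_nonpos hq1 (neg_nonpos.2 hb)
    have h0 : (0:ℝ) ≤ s ^ a := Real.rpow_nonneg hs0.le a
    have h0' : (0:ℝ) ≤ (1 + s ^ q) ^ (-b) := Real.rpow_nonneg (by linarith) _
    rw [Real.norm_eq_abs, Real.norm_eq_abs, abs_of_nonneg (by positivity), abs_of_nonneg h0]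
    nlinarith
  have h2 : IntegrableOn (fun s : ℝ => s ^ a * (1 + s ^ q) ^ (-b)) (Ioi (1:ℝ)) := by
    have base : IntegrableOn (fun s : ℝ => s ^ (a - q * b)) (Ioi (1:ℝ)) :=
      integrableOn_Ioi_rpow_of_lt hab one_pos
    refine base.integrable.mono hmeas.aestronglyMeasurable ?_
    rw [ae_restrict_iff' measurableSet_Ioi]
    refine ae_of_all _ fun s hs => ?_
    have hs1 : (1:ℝ) < s := hs
    have hs0 : (0:ℝ) < s := by linarith
    have hpos : (0:ℝ) < s ^ q := Real.rpow_pos_of_pos hs0 q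
    have h1' : (1 + s ^ q) ^ (-b) ≤ (s ^ q) ^ (-b) :=
      Real.rpow_le_rpow_of_nonpos hpos (by linarith) (neg_nonpos.2 hb)
    have heq : (s ^ q) ^ (-b) = s ^ (q * (-b)) := (Real.rpow_mul hs0.le q (-b)).symm
    have h0 : (0:ℝ) ≤ s ^ a := Real.rpow_nonneg hs0.le a
    have h0' : (0:ℝ) ≤ (1 + s ^ q) ^ (-b) := Real.rpow_nonneg (by positivity) _
    rw [Real.norm_eq_abs, Real.norm_eq_abs, abs_of_nonneg (by positivity),
      abs_of_nonneg (Real.rpow_nonneg hs0.le _)]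
    calc s ^ a * (1 + s ^ q) ^ (-b) ≤ s ^ a * (s ^ q) ^ (-b) :=
          mul_le_mul_of_nonneg_left h1' h0
      _ = s ^ (a - q * b) := by
          rw [heq, ← Real.rpow_add hs0]; ring_nf
  have hst : Ioc (0:ℝ) 1 ∪ Ioi 1 = Ioi (0:ℝ) := Ioc_union_Ioi_eq_Ioi zero_le_one
  have := h1.union h2
  rwa [hst] at this


-- |gg' s| ≤ bnd s pointwise on Ioi 0
lemma gg'_abs_le (n : ℕ) {q : ℝ} (hq1 : 1 < q) {s : ℝ} (hs : 0 < s) :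
    |gg' n q s| ≤ q * (s ^ (q-1) * (1 + s ^ q) ^ (-(n:ℝ))) +
      (n:ℝ) * q * (s ^ (q-1+q) * (1 + s ^ q) ^ (-((n:ℝ)+1))) := by
  have hq0 : (0:ℝ) < q := by linarith
  have e1 : s ^ (q-1) * s ^ q = s ^ (q-1+q) := (Real.rpow_add hs _ _).symm
  have e2 : (-(n:ℝ)) - 1 = -((n:ℝ)+1) := by ring
  have hX : (0:ℝ) ≤ q * s ^ (q-1) * (1 + s ^ q) ^ (-(n:ℝ)) := by
    have h1 : (0:ℝ) ≤ s ^ (q-1) := Real.rpow_nonneg hs.le _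
    have h2 : (0:ℝ) < 1 + s ^ q := by have := Real.rpow_nonneg hs.le q; linarith
    have h3 : (0:ℝ) ≤ (1 + s ^ q) ^ (-(n:ℝ)) := Real.rpow_nonneg h2.le _
    positivity
  have hY : (0:ℝ) ≤ (n:ℝ) * q * (s ^ (q-1) * s ^ q) * (1 + s ^ q) ^ (-(n:ℝ)-1) := by
    have h1 : (0:ℝ) ≤ s ^ (q-1) := Real.rpow_nonneg hs.le _
    have h1' : (0:ℝ) ≤ s ^ q := Real.rpow_nonneg hs.le _
    have h2 : (0:ℝ) < 1 + s ^ q := by linarith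
    have h3 : (0:ℝ) ≤ (1 + s ^ q) ^ (-(n:ℝ)-1) := Real.rpow_nonneg h2.le _
    positivity
  unfold gg'
  rw [← e1, ← e2]
  calc |q * s ^ (q-1) * (1 + s ^ q) ^ (-(n:ℝ)) -
        (n:ℝ) * q * (s ^ (q-1) * s ^ q) * (1 + s ^ q) ^ (-(n:ℝ)-1)|
      ≤ |q * s ^ (q-1) * (1 + s ^ q) ^ (-(n:ℝ))| +
        |(n:ℝ) * q * (s ^ (q-1) * s ^ q) * (1 + s ^ q) ^ (-(n:ℝ)-1)| := abs_sub _ _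
    _ = q * (s ^ (q-1) * (1 + s ^ q) ^ (-(n:ℝ))) +
        (n:ℝ) * q * ((s ^ (q-1) * s ^ q) * (1 + s ^ q) ^ (-(n:ℝ)-1)) := by
          rw [abs_of_nonneg hX, abs_of_nonneg hY]; ring

lemma integrableOn_gg' (n : ℕ) {q : ℝ} (hq1 : 1 < q) (hn : 2 ≤ n) :
    IntegrableOn (gg' n q) (Ioi (0:ℝ)) := by
  have hq0 : (0:ℝ) < q := by linarith
  have hn2 : (2:ℝ) ≤ (n:ℝ) := by exact_mod_cast hn
  have K1 : IntegrableOn (fun s : ℝ => s ^ (q-1) * (1 + s ^ q) ^ (-(n:ℝ))) (Ioi (0:ℝ)) :=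
    intCore hq0 (by linarith) (by linarith) (by nlinarith)
  have K2 : IntegrableOn (fun s : ℝ => s ^ (q-1+q) * (1 + s ^ q) ^ (-((n:ℝ)+1))) (Ioi (0:ℝ)) :=
    intCore hq0 (by linarith) (by linarith) (by nlinarith)
  have hbnd : IntegrableOn (fun s : ℝ =>
      q * (s ^ (q-1) * (1 + s ^ q) ^ (-(n:ℝ))) +
        (n:ℝ) * q * (s ^ (q-1+q) * (1 + s ^ q) ^ (-((n:ℝ)+1)))) (Ioi (0:ℝ)) :=
    (K1.integrable.const_mul q).add (K2.integrable.const_mul _)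
  refine hbnd.integrable.mono (measurable_gg' n q).aestronglyMeasurable ?_
  rw [ae_restrict_iff' measurableSet_Ioi]
  refine ae_of_all _ fun s hs => ?_
  have h := gg'_abs_le n hq1 (hs : (0:ℝ) < s)
  rw [Real.norm_eq_abs, Real.norm_eq_abs]
  exact h.trans (le_abs_self _)

lemma integrableOn_xpow_gg' (n : ℕ) {q : ℝ} (hq1 : 1 < q) (hn : 2 ≤ n)
    (hqn : (n:ℝ) + q - q * n < 0) :
    IntegrableOn (fun s : ℝ => s ^ (n:ℕ) * gg' n q s) (Ioi (0:ℝ)) := by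
  have hq0 : (0:ℝ) < q := by linarith
  have hn2 : (2:ℝ) ≤ (n:ℝ) := by exact_mod_cast hn
  have K1 : IntegrableOn (fun s : ℝ => s ^ ((n:ℝ)+(q-1)) * (1 + s ^ q) ^ (-(n:ℝ))) (Ioi (0:ℝ)) :=
    intCore hq0 (by linarith) (by linarith) (by nlinarith)
  have K2 : IntegrableOn (fun s : ℝ => s ^ ((n:ℝ)+(q-1+q)) * (1 + s ^ q) ^ (-((n:ℝ)+1)))
      (Ioi (0:ℝ)) :=
    intCore hq0 (by linarith) (by linarith) (by nlinarith)
  have hbnd : IntegrableOn (fun s : ℝ =>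
      q * (s ^ ((n:ℝ)+(q-1)) * (1 + s ^ q) ^ (-(n:ℝ))) +
        (n:ℝ) * q * (s ^ ((n:ℝ)+(q-1+q)) * (1 + s ^ q) ^ (-((n:ℝ)+1)))) (Ioi (0:ℝ)) :=
    (K1.integrable.const_mul q).add (K2.integrable.const_mul _)
  have hmeas : Measurable (fun s : ℝ => s ^ (n:ℕ) * gg' n q s) :=
    (measurable_id'.pow_const _).mul (measurable_gg' n q)
  refine hbnd.integrable.mono hmeas.aestronglyMeasurable ?_
  rw [ae_restrict_iff' measurableSet_Ioi]
  refine ae_of_all _ fun s hs => ?_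
  have hs0 : (0:ℝ) < s := hs
  have h := gg'_abs_le n hq1 hs0
  have hsn : (0:ℝ) ≤ s ^ (n:ℕ) := by positivity
  have e0 : s ^ (n:ℕ) = s ^ ((n:ℕ):ℝ) := (Real.rpow_natCast s n).symm
  have e1 : s ^ ((n:ℕ):ℝ) * s ^ (q-1) = s ^ ((n:ℝ)+(q-1)) := (Real.rpow_add hs0 _ _).symm
  have e2 : s ^ ((n:ℕ):ℝ) * s ^ (q-1+q) = s ^ ((n:ℝ)+(q-1+q)) := (Real.rpow_add hs0 _ _).symm
  rw [Real.norm_eq_abs, Real.norm_eq_abs, abs_mul, abs_of_nonneg hsn]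
  calc s ^ (n:ℕ) * |gg' n q s|
      ≤ s ^ (n:ℕ) * (q * (s ^ (q-1) * (1 + s ^ q) ^ (-(n:ℝ))) +
          (n:ℝ) * q * (s ^ (q-1+q) * (1 + s ^ q) ^ (-((n:ℝ)+1)))) :=
        mul_le_mul_of_nonneg_left h hsn
    _ = q * (s ^ ((n:ℝ)+(q-1)) * (1 + s ^ q) ^ (-(n:ℝ))) +
          (n:ℝ) * q * (s ^ ((n:ℝ)+(q-1+q)) * (1 + s ^ q) ^ (-((n:ℝ)+1))) := by
        rw [← e1, ← e2, e0]; ring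
    _ ≤ |q * (s ^ ((n:ℝ)+(q-1)) * (1 + s ^ q) ^ (-(n:ℝ))) +
          (n:ℝ) * q * (s ^ ((n:ℝ)+(q-1+q)) * (1 + s ^ q) ^ (-((n:ℝ)+1)))| := le_abs_self _

lemma integrableOn_xpow_gg (n : ℕ) {q : ℝ} (hq1 : 1 < q) (hn : 2 ≤ n)
    (hqn : (n:ℝ) + q - q * n < 0) :
    IntegrableOn (fun s : ℝ => (n:ℝ) * s ^ (n-1:ℕ) * gg n q s) (Ioi (0:ℝ)) := by
  have hq0 : (0:ℝ) < q := by linarith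
  have hn2 : (2:ℝ) ≤ (n:ℝ) := by exact_mod_cast hn
  have K1 : IntegrableOn (fun s : ℝ => s ^ ((n:ℝ)+q-1) * (1 + s ^ q) ^ (-(n:ℝ))) (Ioi (0:ℝ)) :=
    intCore hq0 (by linarith) (by linarith) (by nlinarith)
  have hK : IntegrableOn (fun s : ℝ => (n:ℝ) * (s ^ ((n:ℝ)+q-1) * (1 + s ^ q) ^ (-(n:ℝ))))
      (Ioi (0:ℝ)) := K1.integrable.const_mul ((n:ℝ))
  refine hK.congr_fun ?_ measurableSet_Ioi
  intro s hs
  have hs0 : (0:ℝ) < s := hs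
  have e0 : (s:ℝ) ^ (n-1:ℕ) = s ^ (((n-1:ℕ)):ℝ) := (Real.rpow_natCast s (n-1)).symm
  have e1 : (((n-1:ℕ)):ℝ) = (n:ℝ) - 1 := by
    have h1 : (1:ℕ) ≤ n := by omega
    push_cast [Nat.cast_sub h1]
    ring
  have key : (n:ℝ) * s ^ (n-1:ℕ) * gg n q s
      = (n:ℝ) * (s ^ ((n:ℝ)+q-1) * (1 + s ^ q) ^ (-(n:ℝ))) := by
    unfold gg
    rw [e0, e1]
    rw [show (n:ℝ) * s ^ ((n:ℝ)-1) * (s ^ q * (1 + s ^ q) ^ (-(n:ℝ)))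
        = (n:ℝ) * ((s ^ ((n:ℝ)-1) * s ^ q) * (1 + s ^ q) ^ (-(n:ℝ))) by ring,
      ← Real.rpow_add hs0]
    rw [show (n:ℝ) - 1 + q = (n:ℝ) + q - 1 by ring]
  exact key.symm

lemma tendsto_gg (n : ℕ) {q : ℝ} (hq1 : 1 < q) (hn : 2 ≤ n) :
    Tendsto (gg n q) atTop (𝓝 0) := by
  have hq0 : (0:ℝ) < q := by linarith
  have hn2 : (2:ℝ) ≤ (n:ℝ) := by exact_mod_cast hn
  have := tendsto_aux hq0 (A := q) (B := (n:ℝ)) (by linarith) (by nlinarith)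
  exact this.congr (fun t => rfl)

lemma gg_repr (n : ℕ) {q : ℝ} (hq1 : 1 < q) (hn : 2 ≤ n) {t : ℝ} (ht : 0 ≤ t) :
    gg n q t = ∫ s in Ioi t, -gg' n q s := by
  have hq0 : (0:ℝ) < q := by linarith
  have key : ∫ s in Ioi t, gg' n q s = 0 - gg n q t :=
    integral_Ioi_of_hasDerivAt_of_tendsto
      (continuousAt_gg n hq0 ht).continuousWithinAt
      (fun s hs => hasDerivAt_gg n hq1 (lt_of_le_of_lt ht hs))
      ((integrableOn_gg' n hq1 hn).mono_set (Ioi_subset_Ioi ht))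
      (tendsto_gg n hq1 hn)
  rw [integral_neg, key]
  ring

lemma integral_u' (n : ℕ) {q : ℝ} (hq1 : 1 < q) (hn : 2 ≤ n)
    (hqn : (n:ℝ) + q - q * n < 0) :
    ∫ s in Ioi (0:ℝ), ((n:ℝ) * s ^ (n-1:ℕ) * gg n q s + s ^ (n:ℕ) * gg' n q s) = 0 := by
  have hq0 : (0:ℝ) < q := by linarith
  have hn2 : (2:ℝ) ≤ (n:ℝ) := by exact_mod_cast hn
  have hno : n ≠ 0 := by omega
  have hcont : ContinuousWithinAt (fun s : ℝ => s ^ (n:ℕ) * gg n q s) (Ici (0:ℝ)) 0 :=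
    ((continuous_pow n).continuousAt.mul (continuousAt_gg n hq0 le_rfl)).continuousWithinAt
  have hderiv : ∀ s ∈ Ioi (0:ℝ), HasDerivAt (fun s : ℝ => s ^ (n:ℕ) * gg n q s)
      ((n:ℝ) * s ^ (n-1:ℕ) * gg n q s + s ^ (n:ℕ) * gg' n q s) s := by
    intro s hs
    exact (hasDerivAt_pow n s).mul (hasDerivAt_gg n hq1 hs)
  have hint : IntegrableOn
      (fun s : ℝ => (n:ℝ) * s ^ (n-1:ℕ) * gg n q s + s ^ (n:ℕ) * gg' n q s) (Ioi (0:ℝ)) :=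
    (integrableOn_xpow_gg n hq1 hn hqn).add (integrableOn_xpow_gg' n hq1 hn hqn)
  have htend : Tendsto (fun s : ℝ => s ^ (n:ℕ) * gg n q s) atTop (𝓝 0) := by
    have h0 := tendsto_aux hq0 (A := (n:ℝ) + q) (B := (n:ℝ)) (by linarith) (by nlinarith)
    refine h0.congr' ?_
    filter_upwards [eventually_gt_atTop (0:ℝ)] with t ht
    unfold gg
    rw [show t ^ ((n:ℝ)+q) = t ^ ((n:ℝ)) * t ^ q from Real.rpow_add ht _ _,
      Real.rpow_natCast]
    ring
  have key := integral_Ioi_of_hasDerivAt_of_tendsto hcont hderiv hint htend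
  rw [key]
  have : gg n q 0 = 0 := by
    unfold gg
    rw [Real.zero_rpow (by linarith : q ≠ 0)]
    ring
  rw [this]
  simp [hno]

lemma integral_xpow_gg'_eq (n : ℕ) {q : ℝ} (hq1 : 1 < q) (hn : 2 ≤ n)
    (hqn : (n:ℝ) + q - q * n < 0) :
    ∫ s in Ioi (0:ℝ), s ^ (n:ℕ) * (-gg' n q s)
      = (n:ℝ) * ∫ ρ in Ioi (0:ℝ), ρ ^ ((n:ℝ) + q - 1) * (1 + ρ ^ q) ^ (-(n:ℝ)) := by
  have hadd := integral_add (μ := volume.restrict (Ioi (0:ℝ)))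
    (integrableOn_xpow_gg n hq1 hn hqn).integrable
    (integrableOn_xpow_gg' n hq1 hn hqn).integrable
  have h0 := integral_u' n hq1 hn hqn
  rw [hadd] at h0
  have e1 : ∫ s in Ioi (0:ℝ), s ^ (n:ℕ) * (-gg' n q s)
      = -∫ s in Ioi (0:ℝ), s ^ (n:ℕ) * gg' n q s := by
    rw [← integral_neg]
    congr 1; funext s; ring
  rw [e1]
  have e2 : ∫ s in Ioi (0:ℝ), (n:ℝ) * s ^ (n-1:ℕ) * gg n q s
      = (n:ℝ) * ∫ ρ in Ioi (0:ℝ), ρ ^ ((n:ℝ) + q - 1) * (1 + ρ ^ q) ^ (-(n:ℝ)) := by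
    rw [← integral_const_mul]
    refine setIntegral_congr_fun measurableSet_Ioi (fun s hs => ?_)
    have hs0 : (0:ℝ) < s := hs
    have e0 : (s:ℝ) ^ (n-1:ℕ) = s ^ (((n-1:ℕ)):ℝ) := (Real.rpow_natCast s (n-1)).symm
    have e1' : (((n-1:ℕ)):ℝ) = (n:ℝ) - 1 := by
      have h1 : (1:ℕ) ≤ n := by omega
      push_cast [Nat.cast_sub h1]
      ring
    unfold gg
    rw [e0, e1']
    rw [show (n:ℝ) * s ^ ((n:ℝ)-1) * (s ^ q * (1 + s ^ q) ^ (-(n:ℝ)))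
        = (n:ℝ) * ((s ^ ((n:ℝ)-1) * s ^ q) * (1 + s ^ q) ^ (-(n:ℝ))) by ring,
      ← Real.rpow_add hs0]
    rw [show (n:ℝ) - 1 + q = (n:ℝ) + q - 1 by ring]
  rw [e2] at h0
  linarith

end Stmt5Aux

open Stmt5Aux

/-- If `μ (B(o,r)) ≤ C rⁿ` and `μ (B(o,r))/rⁿ → ν`, then with `q = p/(p-1)` for `1 < p < n`,
`λ^{(q-1)(n-p)} ∫ d(o,x)^q (λ^q + d(o,x)^q)^{-n} dμ → ν · n ∫₀^∞ ρ^{n+q-1} (1+ρ^q)^{-n} dρ`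
as `λ → ∞`. -/
theorem stmt_5 {X : Type*} [MetricSpace X] [MeasurableSpace X] [BorelSpace X]
    (μ : Measure X) (o : X) (n : ℕ) (hn : 2 ≤ n) (p q : ℝ)
    (hp : 1 < p) (hpn : p < n) (hq : q = p / (p - 1)) (C ν : ℝ)
    (hC : ∀ r > (0:ℝ), μ (Metric.ball o r) ≤ ENNReal.ofReal (C * r ^ n))
    (hν : Tendsto (fun r => (μ (Metric.ball o r)).toReal / r ^ n) atTop (nhds ν)) :
    Tendsto
      (fun lam : ℝ =>
        lam ^ ((q - 1) * ((n : ℝ) - p)) *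
          ∫ x, dist o x ^ q * (lam ^ q + dist o x ^ q) ^ (-(n : ℝ)) ∂μ)
      atTop
      (nhds (ν * ((n : ℝ) *
        ∫ ρ in Ioi (0:ℝ), ρ ^ ((n : ℝ) + q - 1) * (1 + ρ ^ q) ^ (-(n : ℝ))))) := by
  have hp1 : (0:ℝ) < p - 1 := by linarith
  have hqp : q * (p - 1) = p := by rw [hq]; field_simp
  have hq1 : 1 < q := by nlinarith
  have hq0 : (0:ℝ) < q := by linarith
  have hn2 : (2:ℝ) ≤ (n:ℝ) := by exact_mod_cast hn
  have hkey : (q * n - q - n) * (p - 1) = (n:ℝ) - p := by linear_combination ((n:ℝ) - 1) * hqp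
  have hqn : (n:ℝ) + q - q * n < 0 := by nlinarith [hkey, hp1, hpn]
  have hexp : (q - 1) * ((n:ℝ) - p) + (q - q * (n:ℝ)) = -(n:ℝ) := by
    linear_combination (-1:ℝ) * hqp
  have hfin : ∀ r : ℝ, μ (Metric.ball o r) < ⊤ := by
    intro r
    rcases le_or_gt r 0 with h | h
    · simp [Metric.ball_eq_empty.2 h]
    · exact lt_of_le_of_lt (hC r h) ENNReal.ofReal_lt_top
  haveI : SigmaFinite μ :=
    ⟨⟨⟨fun k => Metric.ball o k, fun _ => trivial, fun k => hfin k, Metric.iUnion_ball_nat o⟩⟩⟩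
  have htoReal : ∀ r : ℝ, 0 < r → (μ (Metric.ball o r)).toReal ≤ max C 0 * r ^ (n:ℕ) := by
    intro r hr
    have hrn : (0:ℝ) < r ^ (n:ℕ) := pow_pos hr n
    have h1 : μ (Metric.ball o r) ≤ ENNReal.ofReal (max C 0 * r ^ (n:ℕ)) :=
      le_trans (hC r hr) (ENNReal.ofReal_le_ofReal
        (by nlinarith [le_max_left C (0:ℝ)]))
    exact ENNReal.toReal_le_of_le_ofReal (by positivity) h1
  -- main pointwise-in-lam identity
  have main_eq : ∀ lam : ℝ, 0 < lam →
      lam ^ ((q - 1) * ((n : ℝ) - p)) *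
          ∫ x, dist o x ^ q * (lam ^ q + dist o x ^ q) ^ (-(n : ℝ)) ∂μ
        = ∫ s in Ioi (0:ℝ), (-gg' n q s) *
            (s ^ (n:ℕ) * ((μ (Metric.ball o (lam * s))).toReal / (lam * s) ^ (n:ℕ))) := by
    intro lam hlam
    have hstep1 : ∀ x : X, dist o x ^ q * (lam ^ q + dist o x ^ q) ^ (-(n:ℝ))
        = lam ^ (q - q * (n:ℝ)) * gg n q (dist o x / lam) := by
      intro x
      set d := dist o x with hd
      have hd0 : (0:ℝ) ≤ d := dist_nonneg
      have hlq : (0:ℝ) < lam ^ q := Real.rpow_pos_of_pos hlam q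
      have hdq : (0:ℝ) ≤ d ^ q := Real.rpow_nonneg hd0 q
      unfold gg
      rw [Real.div_rpow hd0 hlam.le]
      rw [show (1:ℝ) + d ^ q / lam ^ q = (lam ^ q + d ^ q) / lam ^ q by field_simp]
      rw [Real.div_rpow (by positivity) hlq.le]
      rw [← Real.rpow_mul hlam.le q (-(n:ℝ))]
      rw [show q - q * (n:ℝ) = q + q * (-(n:ℝ)) by ring, Real.rpow_add hlam]
      have h2 : lam ^ (q * (-(n:ℝ))) ≠ 0 := (Real.rpow_pos_of_pos hlam _).ne'
      field_simp
    have e_int1 : ∫ x, dist o x ^ q * (lam ^ q + dist o x ^ q) ^ (-(n:ℝ)) ∂μ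
        = lam ^ (q - q * (n:ℝ)) * ∫ x, gg n q (dist o x / lam) ∂μ := by
      rw [← integral_const_mul]
      exact integral_congr_ae (ae_of_all _ fun x => hstep1 x)
    set f : X → ℝ → ℝ :=
      fun x s => (Ioi (dist o x / lam)).indicator (fun z => -gg' n q z) s with hfdef
    have e_int2 : ∫ x, gg n q (dist o x / lam) ∂μ = ∫ x, (∫ s, f x s) ∂μ := by
      refine integral_congr_ae (ae_of_all _ fun x => ?_)
      simp only [hfdef]
      rw [integral_indicator measurableSet_Ioi]
      exact gg_repr n hq1 hn (by positivity)
    have hSmeas : MeasurableSet {z : X × ℝ | dist o z.1 / lam < z.2} :=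
      measurableSet_lt ((continuous_const.dist continuous_fst).measurable.div_const lam)
        measurable_snd
    have huncurry : Function.uncurry f = fun z : X × ℝ =>
        ({z : X × ℝ | dist o z.1 / lam < z.2}).indicator (fun w => -gg' n q w.2) z := by
      funext z
      by_cases h : dist o z.1 / lam < z.2
      · simp [Function.uncurry, hfdef, Set.indicator_of_mem, h, Set.mem_Ioi, Set.mem_setOf_eq]
      · simp [Function.uncurry, hfdef, Set.indicator_of_notMem, h, Set.mem_Ioi,
          Set.mem_setOf_eq]
    have hmeas_unc : AEStronglyMeasurable (Function.uncurry f) (μ.prod volume) := by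
      rw [huncurry]
      exact (((measurable_gg' n q).comp measurable_snd).neg.indicator hSmeas).aestronglyMeasurable
    have hf_sect : ∀ s : ℝ, (fun x => f x s)
        = fun x => (Metric.ball o (lam * s)).indicator (fun _ => -gg' n q s) x := by
      intro s; funext x
      by_cases h : dist o x / lam < s
      · have hx : x ∈ Metric.ball o (lam * s) := by
          rw [Metric.mem_ball, dist_comm]
          calc dist o x < s * lam := (div_lt_iff₀ hlam).1 h
            _ = lam * s := mul_comm _ _
        simp [hfdef, Set.indicator_of_mem, h, hx, Set.mem_Ioi]
      · have hx : x ∉ Metric.ball o (lam * s) := by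
          rw [Metric.mem_ball, dist_comm]
          intro hcon
          exact h ((div_lt_iff₀ hlam).2 (by linarith [mul_comm lam s]))
        simp [hfdef, Set.indicator_of_notMem, h, hx, Set.mem_Ioi]
    have hval : ∀ s : ℝ, (∫ x, ‖f x s‖ ∂μ)
        = (μ (Metric.ball o (lam * s))).toReal * ‖gg' n q s‖ := by
      intro s
      have hnorm : (fun x => ‖f x s‖)
          = fun x => (Metric.ball o (lam * s)).indicator (fun _ => ‖gg' n q s‖) x := by
        funext x
        rw [congrFun (hf_sect s) x, norm_indicator_eq_indicator_norm]
        simp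
      rw [hnorm, integral_indicator_const _ measurableSet_ball, smul_eq_mul, measureReal_def]
    have hIntf : Integrable (Function.uncurry f) (μ.prod volume) := by
      refine (integrable_prod_iff' hmeas_unc).2 ⟨?_, ?_⟩
      · refine ae_of_all _ fun s => ?_
        have : (fun x => Function.uncurry f (x, s)) = fun x => f x s := rfl
        rw [this, hf_sect s]
        exact (integrableOn_const (hfin _).ne).integrable_indicator
          measurableSet_ball
      · have hmono : Monotone fun s : ℝ => (μ (Metric.ball o (lam * s))).toReal := by
          intro s t hst
          exact ENNReal.toReal_mono (hfin _).ne
            (measure_mono (Metric.ball_subset_ball (by nlinarith)))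
        have hrw : (fun s : ℝ => ∫ x, ‖Function.uncurry f (x, s)‖ ∂μ)
            = fun s => (μ (Metric.ball o (lam * s))).toReal * ‖gg' n q s‖ := by
          funext s; exact hval s
        rw [hrw]
        refine Integrable.mono (g := fun s => (Ioi (0:ℝ)).indicator
            (fun s => (max C 0 * lam ^ (n:ℕ)) * |s ^ (n:ℕ) * gg' n q s|) s) ?_ ?_ ?_
        · have hbint : IntegrableOn
              (fun s : ℝ => (max C 0 * lam ^ (n:ℕ)) * |s ^ (n:ℕ) * gg' n q s|)
              (Ioi (0:ℝ)) volume :=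
            (integrableOn_xpow_gg' n hq1 hn hqn).abs.const_mul _
          exact hbint.integrable_indicator measurableSet_Ioi
        · exact (hmono.measurable.mul (measurable_gg' n q).norm).aestronglyMeasurable
        · refine ae_of_all _ fun s => ?_
          rcases le_or_gt s 0 with h | h
          · have hempty : Metric.ball o (lam * s) = ∅ := Metric.ball_eq_empty.2 (by nlinarith)
            have hnotmem : s ∉ Ioi (0:ℝ) := by simpa using h
            simp [hempty, Set.indicator_of_notMem hnotmem]
          · have hmem : s ∈ Ioi (0:ℝ) := Set.mem_Ioi.mpr h
            simp only [Set.indicator_of_mem hmem]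
            have hr : (0:ℝ) < lam * s := by positivity
            have h1 := htoReal _ hr
            have h2 : (0:ℝ) ≤ (μ (Metric.ball o (lam * s))).toReal := ENNReal.toReal_nonneg
            have hsn : (0:ℝ) ≤ s ^ (n:ℕ) := by positivity
            have hRHS : (0:ℝ) ≤ max C 0 * lam ^ (n:ℕ) * |s ^ (n:ℕ) * gg' n q s| := by
              have := le_max_right C 0
              positivity
            simp only [Real.norm_eq_abs]
            rw [abs_of_nonneg (mul_nonneg h2 (abs_nonneg _)), abs_of_nonneg hRHS]
            calc (μ (Metric.ball o (lam * s))).toReal * |gg' n q s|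
                ≤ (max C 0 * (lam * s) ^ (n:ℕ)) * |gg' n q s| :=
                  mul_le_mul_of_nonneg_right h1 (abs_nonneg _)
              _ = max C 0 * lam ^ (n:ℕ) * |s ^ (n:ℕ) * gg' n q s| := by
                  rw [abs_mul, abs_of_nonneg hsn, mul_pow]; ring
    have hswap := integral_integral_swap hIntf
    have e_inner : (fun s : ℝ => ∫ x, f x s ∂μ)
        = fun s : ℝ => (μ (Metric.ball o (lam * s))).toReal * (-gg' n q s) := by
      funext s
      rw [hf_sect s, integral_indicator_const _ measurableSet_ball, smul_eq_mul, measureReal_def]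
    have e_restrict : (∫ s : ℝ, (μ (Metric.ball o (lam * s))).toReal * (-gg' n q s))
        = ∫ s in Ioi (0:ℝ), (μ (Metric.ball o (lam * s))).toReal * (-gg' n q s) := by
      rw [← integral_indicator measurableSet_Ioi]
      congr 1
      funext s
      rcases lt_or_ge 0 s with h | h
      · rw [Set.indicator_of_mem (Set.mem_Ioi.mpr h)]
      · have hnotmem : s ∉ Ioi (0:ℝ) := by simpa using h
        have hempty : Metric.ball o (lam * s) = ∅ := Metric.ball_eq_empty.2 (by nlinarith)
        rw [Set.indicator_of_notMem hnotmem, hempty]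
        simp
    have e_final : lam ^ (-(n:ℝ)) *
        ∫ s in Ioi (0:ℝ), (μ (Metric.ball o (lam * s))).toReal * (-gg' n q s)
        = ∫ s in Ioi (0:ℝ), (-gg' n q s) *
            (s ^ (n:ℕ) * ((μ (Metric.ball o (lam * s))).toReal / (lam * s) ^ (n:ℕ))) := by
      rw [← integral_const_mul]
      refine setIntegral_congr_fun measurableSet_Ioi (fun s hs => ?_)
      have hs0 : (0:ℝ) < s := hs
      have hlamn : lam ^ (-(n:ℝ)) = (lam ^ (n:ℕ))⁻¹ := by
        rw [Real.rpow_neg hlam.le, Real.rpow_natCast]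
      rw [hlamn, mul_pow]
      have h1 : (lam:ℝ) ^ (n:ℕ) ≠ 0 := by positivity
      have h2 : (s:ℝ) ^ (n:ℕ) ≠ 0 := by positivity
      field_simp
    rw [e_int1, ← mul_assoc, ← Real.rpow_add hlam, hexp, e_int2, hswap, e_inner,
      e_restrict]
    exact e_final
  -- dominated convergence
  have hDCT : Tendsto (fun lam : ℝ => ∫ s in Ioi (0:ℝ), (-gg' n q s) *
      (s ^ (n:ℕ) * ((μ (Metric.ball o (lam * s))).toReal / (lam * s) ^ (n:ℕ))))
      atTop (𝓝 (∫ s in Ioi (0:ℝ), (-gg' n q s) * (s ^ (n:ℕ) * ν))) := by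
    refine tendsto_integral_filter_of_dominated_convergence
      (bound := fun s => max C 0 * |s ^ (n:ℕ) * gg' n q s|) ?_ ?_ ?_ ?_
    · filter_upwards [eventually_gt_atTop (0:ℝ)] with lam hlam
      have hmono : Monotone fun s : ℝ => (μ (Metric.ball o (lam * s))).toReal := by
        intro s t hst
        exact ENNReal.toReal_mono (hfin _).ne
          (measure_mono (Metric.ball_subset_ball (by nlinarith)))
      exact ((measurable_gg' n q).neg.mul ((measurable_id'.pow_const (n:ℕ)).mul
        (hmono.measurable.div
          ((measurable_id'.const_mul lam).pow_const (n:ℕ))))).aestronglyMeasurable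
    · filter_upwards [eventually_gt_atTop (0:ℝ)] with lam hlam
      rw [ae_restrict_iff' measurableSet_Ioi]
      refine ae_of_all _ fun s hs => ?_
      have hs0 : (0:ℝ) < s := hs
      have hr : (0:ℝ) < lam * s := by positivity
      have h1 := htoReal _ hr
      have h2 : (0:ℝ) ≤ (μ (Metric.ball o (lam * s))).toReal := ENNReal.toReal_nonneg
      have h3 : (0:ℝ) < (lam * s) ^ (n:ℕ) := by positivity
      have hratio : (μ (Metric.ball o (lam * s))).toReal / (lam * s) ^ (n:ℕ) ≤ max C 0 :=
        (div_le_iff₀ h3).2 (by linarith)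
      have hratio0 : (0:ℝ) ≤ (μ (Metric.ball o (lam * s))).toReal / (lam * s) ^ (n:ℕ) :=
        div_nonneg h2 h3.le
      have hsn : (0:ℝ) ≤ s ^ (n:ℕ) := by positivity
      calc ‖(-gg' n q s) * (s ^ (n:ℕ) *
              ((μ (Metric.ball o (lam * s))).toReal / (lam * s) ^ (n:ℕ)))‖
          = |gg' n q s| * (s ^ (n:ℕ) *
              ((μ (Metric.ball o (lam * s))).toReal / (lam * s) ^ (n:ℕ))) := by
            rw [Real.norm_eq_abs, abs_mul, abs_neg,
              abs_of_nonneg (mul_nonneg hsn hratio0)]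
        _ ≤ |gg' n q s| * (s ^ (n:ℕ) * max C 0) := by
            exact mul_le_mul_of_nonneg_left
              (mul_le_mul_of_nonneg_left hratio hsn) (abs_nonneg _)
        _ = max C 0 * |s ^ (n:ℕ) * gg' n q s| := by
            rw [abs_mul, abs_of_nonneg hsn]; ring
    · exact (integrableOn_xpow_gg' n hq1 hn hqn).abs.const_mul _
    · rw [ae_restrict_iff' measurableSet_Ioi]
      refine ae_of_all _ fun s hs => ?_
      have hs0 : (0:ℝ) < s := hs
      have hls : Tendsto (fun lam : ℝ => lam * s) atTop atTop :=
        Tendsto.atTop_mul_const hs0 tendsto_id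
      have h5 : Tendsto (fun lam : ℝ =>
          (μ (Metric.ball o (lam * s))).toReal / (lam * s) ^ (n:ℕ)) atTop (𝓝 ν) :=
        hν.comp hls
      exact (h5.const_mul (s ^ (n:ℕ))).const_mul (-gg' n q s)
  have hval2 : ∫ s in Ioi (0:ℝ), (-gg' n q s) * (s ^ (n:ℕ) * ν)
      = ν * ((n:ℝ) * ∫ ρ in Ioi (0:ℝ), ρ ^ ((n:ℝ) + q - 1) * (1 + ρ ^ q) ^ (-(n:ℝ))) := by
    rw [← integral_xpow_gg'_eq n hq1 hn hqn, ← integral_const_mul]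
    refine setIntegral_congr_fun measurableSet_Ioi (fun s hs => ?_)
    ring
  have hDCT2 : Tendsto (fun lam : ℝ => ∫ s in Ioi (0:ℝ), (-gg' n q s) *
      (s ^ (n:ℕ) * ((μ (Metric.ball o (lam * s))).toReal / (lam * s) ^ (n:ℕ))))
      atTop (𝓝 (ν * ((n:ℝ) *
        ∫ ρ in Ioi (0:ℝ), ρ ^ ((n:ℝ) + q - 1) * (1 + ρ ^ q) ^ (-(n:ℝ))))) := by
    rw [← hval2]; exact hDCT
  refine Tendsto.congr' ?_ hDCT2
  filter_upwards [eventually_gt_atTop (0:ℝ)] with lam hlam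
  exact (main_eq lam hlam).symm
end

section
/- Let n ≥ 3 be a natural number and let f : ℝⁿ → ℝ be given by f(x) = (1 + ‖x‖²)^{−(n−2)/2}. Then f is continuously differentiable, ‖∇f(x)‖ = (n−2)·‖x‖·(1+‖x‖²)^{−n/2}, and ∫_{ℝⁿ} ‖∇f(x)‖² dx = (n(n−2)/4) · σ_n^{2/n} · ( ∫_{ℝⁿ} (1+‖x‖²)^{−n} dx )^{(n−2)/n}, where σ_n = 2π^{(n+1)/2}/Γ((n+1)/2) is the volume of the unit sphere Sⁿ ⊂ ℝ^{n+1}. -/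
open Set Filter MeasureTheory InnerProductSpace

lemma beta_Ioo' {a b : ℝ} (ha : 0 < a) (hb : 0 < b) :
    ∫ x in Ioo (0:ℝ) 1, x ^ (a-1) * (1-x) ^ (b-1)
      = Real.Gamma a * Real.Gamma b / Real.Gamma (a+b) := by
  have hG : Real.Gamma (a+b) ≠ 0 := (Real.Gamma_pos_of_pos (by linarith)).ne'
  have key := Complex.Gamma_mul_Gamma_eq_betaIntegral (s := (a:ℂ)) (t := (b:ℂ))
    (by simpa using ha) (by simpa using hb)
  rw [Complex.betaIntegral] at key
  have : (∫ x in (0:ℝ)..1, (x:ℂ) ^ ((a:ℂ)-1) * ((1:ℂ)-x) ^ ((b:ℂ)-1))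
      = ((∫ x in (0:ℝ)..1, x ^ (a-1) * (1-x) ^ (b-1) : ℝ) : ℂ) := by
    rw [← intervalIntegral.integral_ofReal]
    refine intervalIntegral.integral_congr fun x hx => ?_
    rw [uIcc_of_le zero_le_one] at hx
    have h1 : (0:ℝ) ≤ x := hx.1
    have h2 : (0:ℝ) ≤ 1 - x := by linarith [hx.2]
    rw [show ((a:ℂ)-1) = ((a-1:ℝ):ℂ) by push_cast; ring,
      show ((b:ℂ)-1) = ((b-1:ℝ):ℂ) by push_cast; ring,
      show ((1:ℂ)-(x:ℂ)) = ((1-x:ℝ):ℂ) by push_cast; ring,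
      ← Complex.ofReal_cpow h1, ← Complex.ofReal_cpow h2]
    push_cast
    ring
  rw [this, ← Complex.ofReal_add, Complex.Gamma_ofReal, Complex.Gamma_ofReal,
    Complex.Gamma_ofReal, ← Complex.ofReal_mul, ← Complex.ofReal_mul,
    Complex.ofReal_inj] at key
  rw [intervalIntegral.integral_of_le zero_le_one, integral_Ioc_eq_integral_Ioo] at key
  rw [key]; field_simp

lemma subst_Ioi' (g : ℝ → ℝ) :
    ∫ r in Ioi (0:ℝ), g r
      = ∫ u in Ioo (0:ℝ) 1, ((1-u)^2)⁻¹ * g (u / (1-u)) := by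
  have himg : (fun u => u / (1-u)) '' Ioo (0:ℝ) 1 = Ioi (0:ℝ) := by
    ext r
    constructor
    · rintro ⟨u, hu, rfl⟩
      exact div_pos hu.1 (by linarith [hu.2])
    · intro hr
      refine ⟨r / (1+r), ⟨div_pos hr (by linarith [mem_Ioi.mp hr]), ?_⟩, ?_⟩
      · rw [div_lt_one (by linarith [mem_Ioi.mp hr])]; linarith [mem_Ioi.mp hr]
      · have h1 : (1:ℝ) + r ≠ 0 := by have := mem_Ioi.mp hr; positivity
        field_simp
        ring
  have hderiv : ∀ u ∈ Ioo (0:ℝ) 1,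
      HasDerivWithinAt (fun u => u / (1-u)) (((1-u)^2)⁻¹) (Ioo (0:ℝ) 1) u := by
    intro u hu
    have h1 : (1:ℝ) - u ≠ 0 := by have := hu.2; intro h; simp [sub_eq_zero] at h; linarith
    have := (hasDerivAt_id u).div ((hasDerivAt_const u (1:ℝ)).sub (hasDerivAt_id u)) h1
    refine this.hasDerivWithinAt.congr_deriv ?_
    simp only [Pi.sub_apply, id]
    ring
  have hinj : InjOn (fun u => u / (1-u)) (Ioo (0:ℝ) 1) := by
    intro u hu v hv h
    have h1 : (1:ℝ) - u ≠ 0 := by have := hu.2; intro hh; simp [sub_eq_zero] at hh; linarith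
    have h2 : (1:ℝ) - v ≠ 0 := by have := hv.2; intro hh; simp [sub_eq_zero] at hh; linarith
    field_simp at h
    nlinarith [h]
  rw [← himg, integral_image_eq_integral_abs_deriv_smul measurableSet_Ioo hderiv hinj g]
  refine setIntegral_congr_fun measurableSet_Ioo fun u hu => ?_
  have h2 : (0:ℝ) < 1 - u := by linarith [hu.2]
  rw [abs_of_nonneg (by positivity)]
  simp [smul_eq_mul]

lemma beta_Ioi' {a b : ℝ} (ha : 0 < a) (hb : 0 < b) :
    ∫ r in Ioi (0:ℝ), r ^ (a-1) * (1+r) ^ (-(a+b))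
      = Real.Gamma a * Real.Gamma b / Real.Gamma (a+b) := by
  rw [subst_Ioi' (fun r => r ^ (a-1) * (1+r) ^ (-(a+b))), ← beta_Ioo' ha hb]
  refine setIntegral_congr_fun measurableSet_Ioo fun u hu => ?_
  have hu0 : (0:ℝ) < u := hu.1
  have hw : (0:ℝ) < 1 - u := by linarith [hu.2]
  have h1 : (1:ℝ) + u / (1-u) = (1-u)⁻¹ := by field_simp; ring
  rw [h1, Real.div_rpow hu0.le hw.le, Real.inv_rpow hw.le, ← Real.rpow_neg hw.le,
    neg_neg]
  rw [show ((1-u)^2)⁻¹ = (1-u) ^ (-2 : ℝ) by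
    rw [← Real.rpow_two, ← Real.rpow_neg hw.le]]
  rw [div_eq_mul_inv, ← Real.rpow_neg hw.le]
  calc (1-u) ^ (-2:ℝ) * (u ^ (a-1) * (1-u) ^ (-(a-1)) * (1-u) ^ (a+b))
      = u ^ (a-1) * ((1-u) ^ (-2:ℝ) * (1-u) ^ (-(a-1)) * (1-u) ^ (a+b)) := by ring
    _ = u ^ (a-1) * (1-u) ^ (b-1) := by
        rw [← Real.rpow_add hw, ← Real.rpow_add hw]
        ring_nf

lemma beta_sq' {a b : ℝ} (ha : 0 < a) (hb : 0 < b) :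
    ∫ x in Ioi (0:ℝ), x ^ (2*a-1) * (1+x^2) ^ (-(a+b))
      = Real.Gamma a * Real.Gamma b / (2 * Real.Gamma (a+b)) := by
  have key := integral_comp_rpow_Ioi (fun y => (2:ℝ)⁻¹ * (y ^ (a-1) * (1+y) ^ (-(a+b))))
    (p := 2) two_ne_zero
  simp only [smul_eq_mul] at key
  calc ∫ x in Ioi (0:ℝ), x ^ (2*a-1) * (1+x^2) ^ (-(a+b))
      = ∫ x in Ioi (0:ℝ),
          |(2:ℝ)| * x ^ ((2:ℝ)-1) * ((2:ℝ)⁻¹ * ((x ^ (2:ℝ)) ^ (a-1) * (1 + x ^ (2:ℝ)) ^ (-(a+b)))) := by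
        refine setIntegral_congr_fun measurableSet_Ioi fun x hx => ?_
        have hx0 : (0:ℝ) < x := hx
        have h2 : x ^ (2:ℝ) = x ^ 2 := by
          rw [← Real.rpow_natCast x 2]; norm_num
        have h3 : ((x^2 : ℝ)) ^ (a-1) = x ^ (2*(a-1)) := by
          rw [← Real.rpow_natCast x 2, ← Real.rpow_mul hx0.le]; norm_num
        have hxx : x ^ (2*a-1) = x * x ^ (2*(a-1)) := by
          rw [show 2*a-1 = 1 + 2*(a-1) by ring, Real.rpow_add hx0, Real.rpow_one]
        rw [h2, h3, hxx, show |(2:ℝ)| = 2 by norm_num,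
          show ((2:ℝ)-1) = 1 by norm_num, Real.rpow_one]
        ring
    _ = ∫ y in Ioi (0:ℝ), (2:ℝ)⁻¹ * (y ^ (a-1) * (1+y) ^ (-(a+b))) := key
    _ = (2:ℝ)⁻¹ * ∫ y in Ioi (0:ℝ), y ^ (a-1) * (1+y) ^ (-(a+b)) := integral_const_mul _ _
    _ = Real.Gamma a * Real.Gamma b / (2 * Real.Gamma (a+b)) := by
        rw [beta_Ioi' ha hb]; field_simp

lemma euclid_int' (n : ℕ) (hn : 1 ≤ n) (g : ℝ → ℝ) :
    ∫ x : EuclideanSpace ℝ (Fin n), g ‖x‖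
      = (n : ℝ) * ((Real.sqrt Real.pi) ^ n / Real.Gamma (n/2+1)) *
        ∫ y in Ioi (0:ℝ), y ^ (n-1) * g y := by
  haveI : Nonempty (Fin n) := ⟨⟨0, by omega⟩⟩
  haveI : Nontrivial (EuclideanSpace ℝ (Fin n)) := by infer_instance
  have := integral_fun_norm_addHaar (volume : Measure (EuclideanSpace ℝ (Fin n))) g
  rw [this]
  rw [measureReal_def, EuclideanSpace.volume_ball]
  have hdim : Module.finrank ℝ (EuclideanSpace ℝ (Fin n)) = n := by
    simp [finrank_euclideanSpace]
  rw [hdim]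
  have hG : 0 < Real.Gamma ((n:ℝ)/2+1) := Real.Gamma_pos_of_pos (by positivity)
  have hV : ((ENNReal.ofReal 1) ^ Fintype.card (Fin n) *
      ENNReal.ofReal (Real.sqrt Real.pi ^ Fintype.card (Fin n) / Real.Gamma (Fintype.card (Fin n) / 2 + 1))).toReal
      = (Real.sqrt Real.pi) ^ n / Real.Gamma (n/2+1) := by
    simp only [ENNReal.ofReal_one, one_pow, one_mul, Fintype.card_fin]
    rw [ENNReal.toReal_ofReal (by positivity)]
  rw [hV, nsmul_eq_mul, smul_eq_mul, mul_assoc]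
  simp [smul_eq_mul]

lemma grad_aux (n : ℕ) (hn : 3 ≤ n) (x : EuclideanSpace ℝ (Fin n)) :
    HasGradientAt (fun x : EuclideanSpace ℝ (Fin n) => (1 + ‖x‖ ^ 2) ^ (-(((n : ℝ) - 2) / 2)))
      ((-((n:ℝ)-2) * (1 + ‖x‖ ^ 2) ^ (-(n:ℝ)/2)) • x) x := by
  set c : ℝ := -(((n:ℝ)-2)/2) with hc
  have hpos : (0:ℝ) < 1 + ‖x‖^2 := by positivity
  have hq : HasFDerivAt (fun x : EuclideanSpace ℝ (Fin n) => ‖x‖^2)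
      (2 • (innerSL ℝ x)) x := by
    simpa using (hasFDerivAt_id x).norm_sq
  have base := Real.hasDerivAt_rpow_const (x := 1+‖x‖^2) (p := c) (Or.inl hpos.ne')
  have hadd : HasDerivAt (fun t : ℝ => 1 + t) 1 (‖x‖^2) := by
    simpa using (hasDerivAt_id (‖x‖^2)).const_add (1:ℝ)
  have hφ : HasDerivAt (fun t : ℝ => (1+t) ^ c) (c * (1+‖x‖^2)^(c-1)) (‖x‖^2) := by
    have h := base.comp (‖x‖^2) hadd; rw [mul_one] at h; exact h
  have hcomp := hφ.comp_hasFDerivAt x hq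
  have hgr : HasGradientAt (fun x : EuclideanSpace ℝ (Fin n) => (1 + ‖x‖ ^ 2) ^ c)
      ((2 * (c * (1+‖x‖^2)^(c-1))) • x) x := by
    rw [HasGradientAt, HasGradientAtFilter]
    have heq : (toDual ℝ (EuclideanSpace ℝ (Fin n))) ((2 * (c * (1+‖x‖^2)^(c-1))) • x)
        = (c * (1+‖x‖^2)^(c-1)) • (2 • (innerSL ℝ x)) := by
      ext y
      simp only [toDual_apply_apply, ContinuousLinearMap.coe_smul', Pi.smul_apply, innerSL_apply_apply,
        real_inner_smul_left, smul_eq_mul]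
      ring
    rw [heq]
    exact hcomp
  have h1 : 2 * (c * (1+‖x‖^2)^(c-1)) = -((n:ℝ)-2) * (1 + ‖x‖ ^ 2) ^ (-(n:ℝ)/2) := by
    have : c - 1 = -(n:ℝ)/2 := by rw [hc]; ring
    rw [this]; ring
  rw [h1] at hgr
  exact hgr

/-- The function `f(x) = (1+‖x‖²)^{-(n-2)/2}` on `ℝⁿ` is `C¹`, its gradient has norm
`(n-2)‖x‖(1+‖x‖²)^{-n/2}`, and it realizes equality in the sharp Sobolev inequality:
`∫ ‖∇f‖² = (n(n-2)/4) σ_n^{2/n} (∫ (1+‖x‖²)^{-n})^{(n-2)/n}`. -/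
theorem stmt_10 (n : ℕ) (hn : 3 ≤ n)
    (f : EuclideanSpace ℝ (Fin n) → ℝ)
    (hf : ∀ x, f x = (1 + ‖x‖ ^ 2) ^ (-(((n : ℝ) - 2) / 2))) :
    ContDiff ℝ 1 f ∧
    (∀ x, ‖gradient f x‖ = ((n : ℝ) - 2) * ‖x‖ * (1 + ‖x‖ ^ 2) ^ (-(n : ℝ) / 2)) ∧
    ∫ x, ‖gradient f x‖ ^ 2
      = ((n : ℝ) * ((n : ℝ) - 2) / 4) *
          (2 * Real.pi ^ (((n : ℝ) + 1) / 2) / Real.Gamma (((n : ℝ) + 1) / 2)) ^ ((2 : ℝ) / n) *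
          (∫ x : EuclideanSpace ℝ (Fin n), (1 + ‖x‖ ^ 2) ^ (-(n : ℝ))) ^ (((n : ℝ) - 2) / n) := by
  have hfe : f = fun x => (1 + ‖x‖ ^ 2) ^ (-(((n : ℝ) - 2) / 2)) := funext hf
  subst hfe
  have hN3 : (3:ℝ) ≤ (n:ℝ) := by exact_mod_cast hn
  have hn1 : 1 ≤ n := by omega
  -- gradient norm
  have hgradnorm : ∀ x : EuclideanSpace ℝ (Fin n),
      ‖gradient (fun x : EuclideanSpace ℝ (Fin n) => (1 + ‖x‖ ^ 2) ^ (-(((n:ℝ) - 2) / 2))) x‖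
        = ((n:ℝ) - 2) * ‖x‖ * (1 + ‖x‖ ^ 2) ^ (-(n:ℝ) / 2) := by
    intro x
    rw [(grad_aux n hn x).gradient]
    rw [norm_smul]
    have h2 : (0:ℝ) < (1 + ‖x‖ ^ 2) ^ (-(n:ℝ)/2) := Real.rpow_pos_of_pos (by positivity) _
    rw [Real.norm_eq_abs, abs_of_nonpos (by nlinarith)]
    ring
  refine ⟨?_, hgradnorm, ?_⟩
  · -- ContDiff
    rw [contDiff_iff_contDiffAt]
    intro x
    have hb : ContDiffAt ℝ 1 (fun x : EuclideanSpace ℝ (Fin n) => 1 + ‖x‖ ^ 2) x :=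
      contDiffAt_const.add (contDiff_norm_sq ℝ).contDiffAt
    exact hb.rpow_const_of_ne (by positivity)
  · -- the integral identity
    have hNne : (n:ℝ) ≠ 0 := by positivity
    have hG2 : (0:ℝ) < Real.Gamma ((n:ℝ)/2) := Real.Gamma_pos_of_pos (by linarith)
    have hGn : (0:ℝ) < Real.Gamma (n:ℝ) := Real.Gamma_pos_of_pos (by linarith)
    have hGh : (0:ℝ) < Real.Gamma (((n:ℝ)+1)/2) := Real.Gamma_pos_of_pos (by linarith)
    have hGm : (0:ℝ) < Real.Gamma ((n:ℝ)/2-1) := Real.Gamma_pos_of_pos (by linarith)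
    have hG1 : (0:ℝ) < Real.Gamma ((n:ℝ)/2+1) := Real.Gamma_pos_of_pos (by linarith)
    set P : ℝ := Real.pi ^ ((n:ℝ)/2) with hP
    have hPpos : 0 < P := Real.rpow_pos_of_pos Real.pi_pos _
    set S : ℝ := Real.sqrt Real.pi with hS
    have hSpos : 0 < S := Real.sqrt_pos.mpr Real.pi_pos
    have hSn : S ^ n = P := by
      rw [hS, hP, Real.sqrt_eq_rpow, ← Real.rpow_natCast (Real.pi ^ ((1:ℝ)/2)) n,
        ← Real.rpow_mul Real.pi_pos.le]
      congr 1
      ring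
    -- value of the basic integral
    have e1 : ∫ y in Ioi (0:ℝ), (y:ℝ)^(n-1) * (1+y^2)^(-(n:ℝ))
        = Real.Gamma ((n:ℝ)/2)^2 / (2 * Real.Gamma (n:ℝ)) := by
      have hbs := beta_sq' (a := (n:ℝ)/2) (b := (n:ℝ)/2) (by linarith) (by linarith)
      rw [show (n:ℝ)/2+(n:ℝ)/2 = (n:ℝ) by ring,
        show Real.Gamma ((n:ℝ)/2) * Real.Gamma ((n:ℝ)/2) = Real.Gamma ((n:ℝ)/2)^2 from (sq _).symm] at hbs
      rw [← hbs]
      refine setIntegral_congr_fun measurableSet_Ioi fun y hy => ?_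
      have hy0 : (0:ℝ) < y := hy
      have hcast : ((n-1:ℕ):ℝ) = (n:ℝ)-1 := by
        push_cast [hn1]; ring
      rw [← Real.rpow_natCast y (n-1), hcast,
        show 2*((n:ℝ)/2)-1 = (n:ℝ)-1 by ring]
    have e2 : ∫ y in Ioi (0:ℝ), (y:ℝ)^(n-1) * (y^2 * (1+y^2)^(-(n:ℝ)))
        = Real.Gamma ((n:ℝ)/2+1) * Real.Gamma ((n:ℝ)/2-1) / (2 * Real.Gamma (n:ℝ)) := by
      have hbs := beta_sq' (a := (n:ℝ)/2+1) (b := (n:ℝ)/2-1) (by linarith) (by linarith)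
      rw [show ((n:ℝ)/2+1)+((n:ℝ)/2-1) = (n:ℝ) by ring] at hbs
      rw [← hbs]
      refine setIntegral_congr_fun measurableSet_Ioi fun y hy => ?_
      have hy0 : (0:ℝ) < y := hy
      have h1 : (y:ℝ)^(n-1) * (y^2 * (1+y^2)^(-(n:ℝ)))
          = y^(n+1) * (1+y^2)^(-(n:ℝ)) := by
        rw [show n+1 = (n-1)+2 by omega, pow_add]
        ring
      have hcast : ((n+1:ℕ):ℝ) = (n:ℝ)+1 := by push_cast; ring
      rw [h1, ← Real.rpow_natCast y (n+1), hcast,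
        show 2*((n:ℝ)/2+1)-1 = (n:ℝ)+1 by ring]
    -- the euclidean integrals
    have hI : (∫ x : EuclideanSpace ℝ (Fin n), (1 + ‖x‖ ^ 2) ^ (-(n:ℝ)))
        = (n:ℝ) * (S ^ n / Real.Gamma ((n:ℝ)/2+1)) *
          ∫ y in Ioi (0:ℝ), (y:ℝ)^(n-1) * (1+y^2)^(-(n:ℝ)) :=
      euclid_int' n hn1 (fun r => (1+r^2)^(-(n:ℝ)))
    have hJ : (∫ x : EuclideanSpace ℝ (Fin n), ‖x‖^2 * (1 + ‖x‖ ^ 2) ^ (-(n:ℝ)))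
        = (n:ℝ) * (S ^ n / Real.Gamma ((n:ℝ)/2+1)) *
          ∫ y in Ioi (0:ℝ), (y:ℝ)^(n-1) * (y^2 * (1+y^2)^(-(n:ℝ))) :=
      euclid_int' n hn1 (fun r => r^2 * (1+r^2)^(-(n:ℝ)))
    have hGadd : Real.Gamma ((n:ℝ)/2+1) = ((n:ℝ)/2) * Real.Gamma ((n:ℝ)/2) :=
      Real.Gamma_add_one (by positivity)
    have hGrec : Real.Gamma ((n:ℝ)/2) = ((n:ℝ)/2-1) * Real.Gamma ((n:ℝ)/2-1) := by
      have hne : (n:ℝ)/2-1 ≠ 0 := by intro h; rw [sub_eq_zero] at h; linarith [h]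
      have := Real.Gamma_add_one hne
      rw [sub_add_cancel] at this
      rw [this]
    -- value of I
    have hIval : (∫ x : EuclideanSpace ℝ (Fin n), (1 + ‖x‖ ^ 2) ^ (-(n:ℝ)))
        = P * Real.Gamma ((n:ℝ)/2) / Real.Gamma (n:ℝ) := by
      rw [hI, e1, hSn, hGadd]
      field_simp
    have hIpos : (0:ℝ) < P * Real.Gamma ((n:ℝ)/2) / Real.Gamma (n:ℝ) := by positivity
    -- value of J
    have hJval : (∫ x : EuclideanSpace ℝ (Fin n), ‖x‖^2 * (1 + ‖x‖ ^ 2) ^ (-(n:ℝ)))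
        = ((n:ℝ) / ((n:ℝ)-2)) * (P * Real.Gamma ((n:ℝ)/2) / Real.Gamma (n:ℝ)) := by
      rw [hJ, e2, hSn, hGrec]
      have h2 : ((n:ℝ)-2) ≠ 0 := by intro h; rw [sub_eq_zero] at h; linarith [h]
      field_simp
    -- duplication formula
    have hdup := Real.Gamma_mul_Gamma_add_half ((n:ℝ)/2)
    rw [show 2*((n:ℝ)/2) = (n:ℝ) by ring, show (n:ℝ)/2+1/2 = ((n:ℝ)+1)/2 by ring] at hdup
    have hpi : Real.pi ^ (((n:ℝ)+1)/2) = P * S := by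
      rw [hP, hS, show ((n:ℝ)+1)/2 = (n:ℝ)/2 + 1/2 by ring, Real.rpow_add Real.pi_pos,
        Real.sqrt_eq_rpow]
    have hsigma : 2 * Real.pi ^ (((n:ℝ)+1)/2) / Real.Gamma (((n:ℝ)+1)/2)
        = (2:ℝ)^((n:ℝ)) * (P * Real.Gamma ((n:ℝ)/2) / Real.Gamma (n:ℝ)) := by
      have hA : Real.Gamma ((n:ℝ)/2) = Real.Gamma (n:ℝ) * (2:ℝ)^(1-(n:ℝ)) * S /
          Real.Gamma (((n:ℝ)+1)/2) := by
        rw [eq_div_iff hGh.ne']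
        exact hdup
      rw [hA]
      have h2p : ((2:ℝ))^((n:ℝ)) * (2:ℝ)^(1-(n:ℝ)) = 2 := by
        rw [← Real.rpow_add (by norm_num)]
        norm_num
      rw [hpi]
      have h2pn : ((2:ℝ))^(n:ℕ) * (2:ℝ)^(1-(n:ℝ)) = 2 := by
        rw [← Real.rpow_natCast (2:ℝ) n]; exact h2p
      field_simp
      linear_combination -h2p
    -- LHS
    have hL : (∫ x : EuclideanSpace ℝ (Fin n),
        ‖gradient (fun x : EuclideanSpace ℝ (Fin n) => (1 + ‖x‖ ^ 2) ^ (-(((n:ℝ) - 2) / 2))) x‖ ^ 2)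
        = ((n:ℝ)-2)^2 * ∫ x : EuclideanSpace ℝ (Fin n), ‖x‖^2 * (1 + ‖x‖ ^ 2) ^ (-(n:ℝ)) := by
      rw [← integral_const_mul]
      refine integral_congr_ae (Filter.EventuallyEq.of_eq (funext fun x => ?_))
      rw [hgradnorm x]
      have hA : ((1+‖x‖^2) ^ (-(n:ℝ)/2))^2 = (1+‖x‖^2)^(-(n:ℝ)) := by
        rw [← Real.rpow_natCast ((1+‖x‖^2)^(-(n:ℝ)/2)) 2, ← Real.rpow_mul (by positivity)]
        norm_num
      calc (((n:ℝ) - 2) * ‖x‖ * (1 + ‖x‖ ^ 2) ^ (-(n:ℝ) / 2))^2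
          = ((n:ℝ)-2)^2 * (‖x‖^2 * ((1 + ‖x‖ ^ 2) ^ (-(n:ℝ)/2))^2) := by ring
        _ = ((n:ℝ)-2)^2 * (‖x‖^2 * (1 + ‖x‖ ^ 2) ^ (-(n:ℝ))) := by rw [hA]
    rw [hL, hJval, hIval, hsigma]
    have hrw1 : ((2:ℝ)^((n:ℝ)) * (P * Real.Gamma ((n:ℝ)/2) / Real.Gamma (n:ℝ))) ^ ((2:ℝ)/n)
        = 4 * (P * Real.Gamma ((n:ℝ)/2) / Real.Gamma (n:ℝ)) ^ ((2:ℝ)/n) := by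
      rw [Real.mul_rpow (by positivity) (by positivity)]
      congr 1
      rw [← Real.rpow_mul (by norm_num : (0:ℝ) ≤ 2), show (n:ℝ)*((2:ℝ)/n) = 2 by field_simp,
        Real.rpow_two]
      norm_num
    rw [hrw1]
    set I : ℝ := P * Real.Gamma ((n:ℝ)/2) / Real.Gamma (n:ℝ) with hIdef
    have hIrw : I ^ ((2:ℝ)/n) * I ^ (((n:ℝ)-2)/n) = I := by
      rw [← Real.rpow_add hIpos, show (2:ℝ)/n + ((n:ℝ)-2)/n = 1 by field_simp; ring,
        Real.rpow_one]
    have h2 : ((n:ℝ)-2) ≠ 0 := by intro h; rw [sub_eq_zero] at h; linarith [h]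
    calc ((n:ℝ)-2)^2 * ((n:ℝ)/((n:ℝ)-2) * I)
        = ((n:ℝ)*((n:ℝ)-2)) * I := by field_simp
      _ = ((n:ℝ)*((n:ℝ)-2)/4) * (4 * I ^ ((2:ℝ)/n)) * I ^ (((n:ℝ)-2)/n) := by
          rw [show ((n:ℝ)*((n:ℝ)-2)/4) * (4 * I ^ ((2:ℝ)/n)) * I ^ (((n:ℝ)-2)/n)
              = ((n:ℝ)*((n:ℝ)-2)) * (I ^ ((2:ℝ)/n) * I ^ (((n:ℝ)-2)/n)) by ring, hIrw]
end

section
/- Let n ≥ 2 be a natural number, p ∈ (1,n) a real number, q = p/(p−1), and let f : ℝⁿ → ℝ be given by f(x) = (1 + ‖x‖^q)^{−(n−p)/p}. Then f is differentiable on ℝⁿ, ‖∇f(x)‖ = q·((n−p)/p)·‖x‖^{q−1}·(1+‖x‖^q)^{−n/p}, and ∫_{ℝⁿ} ‖∇f(x)‖^p dx = q^p·((n−p)/p)^p · n·ω_n · ∫₀^∞ ρ^{n+q−1}·(1+ρ^q)^{−n} dρ, where ω_n = π^{n/2}/Γ(n/2+1) is the volume of the unit ball of ℝⁿ. -/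
open Set Filter MeasureTheory

/-- The extremal function `f(x) = (1+‖x‖^q)^{-(n-p)/p}` of the `L^p` Sobolev inequality
is differentiable, `‖∇f(x)‖ = q((n-p)/p)‖x‖^{q-1}(1+‖x‖^q)^{-n/p}`, and
`∫ ‖∇f‖^p = q^p ((n-p)/p)^p n ω_n ∫₀^∞ ρ^{n+q-1}(1+ρ^q)^{-n} dρ`, where
`ω_n = π^{n/2}/Γ(n/2+1)`. -/
theorem stmt_11 (n : ℕ) (hn : 2 ≤ n) (p q : ℝ) (hp : 1 < p) (hpn : p < n)
    (hq : q = p / (p - 1))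
    (f : EuclideanSpace ℝ (Fin n) → ℝ)
    (hf : ∀ x, f x = (1 + ‖x‖ ^ q) ^ (-(((n : ℝ) - p) / p))) :
    Differentiable ℝ f ∧
    (∀ x, ‖gradient f x‖
        = q * (((n : ℝ) - p) / p) * ‖x‖ ^ (q - 1) * (1 + ‖x‖ ^ q) ^ (-(n : ℝ) / p)) ∧
    ∫ x, ‖gradient f x‖ ^ p
      = q ^ p * (((n : ℝ) - p) / p) ^ p * (n : ℝ) *
          (Real.pi ^ ((n : ℝ) / 2) / Real.Gamma ((n : ℝ) / 2 + 1)) *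
          ∫ ρ in Ioi (0:ℝ), ρ ^ ((n : ℝ) + q - 1) * (1 + ρ ^ q) ^ (-(n : ℝ)) := by
  have hp0 : (0:ℝ) < p := lt_trans one_pos hp
  have hp1 : (0:ℝ) < p - 1 := by linarith
  have hq1 : 1 < q := by
    rw [hq, lt_div_iff₀ hp1]; linarith
  have hq0 : (0:ℝ) < q := lt_trans one_pos hq1
  set c : ℝ := ((n:ℝ) - p) / p with hc
  have hnc : (0:ℝ) < (n:ℝ) - p := by
    have : (p:ℝ) < (n:ℝ) := hpn
    linarith
  have hc0 : 0 < c := div_pos hnc hp0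
  have hbase : ∀ x : EuclideanSpace ℝ (Fin n), (0:ℝ) < 1 + ‖x‖ ^ q := by
    intro x; positivity
  have hnp : -c - 1 = -(n:ℝ) / p := by
    rw [hc]; field_simp; ring
  have key : ∀ x, HasFDerivAt f
      ((-c * (1 + ‖x‖ ^ q) ^ (-c - 1) * (q * ‖x‖ ^ (q - 2))) • innerSL ℝ x) x := by
    intro x
    have h1 : HasFDerivAt (fun x : EuclideanSpace ℝ (Fin n) => 1 + ‖x‖ ^ q)
        ((q * ‖x‖ ^ (q - 2)) • innerSL ℝ x) x :=
      (hasFDerivAt_norm_rpow x hq1).const_add 1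
    have h2 := h1.rpow_const (p := -c) (Or.inl (hbase x).ne')
    have hfe : f = fun x : EuclideanSpace ℝ (Fin n) => (1 + ‖x‖ ^ q) ^ (-c) := funext hf
    rw [hfe]
    rw [smul_smul] at h2
    exact h2
  have hdiff : Differentiable ℝ f := fun x => (key x).differentiableAt
  have norm2 : ∀ x : EuclideanSpace ℝ (Fin n), ‖gradient f x‖
      = q * c * ‖x‖ ^ (q - 1) * (1 + ‖x‖ ^ q) ^ (-(n:ℝ) / p) := by
    intro x
    have hg : gradient f x = (InnerProductSpace.toDual ℝ _).symm
        ((-c * (1 + ‖x‖ ^ q) ^ (-c - 1) * (q * ‖x‖ ^ (q - 2))) • innerSL ℝ x) := by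
      rw [gradient, (key x).fderiv]
    rw [hg, LinearIsometryEquiv.norm_map, norm_smul, innerSL_apply_norm, Real.norm_eq_abs]
    have habs : |(-c * (1 + ‖x‖ ^ q) ^ (-c - 1) * (q * ‖x‖ ^ (q - 2)))|
        = c * (1 + ‖x‖ ^ q) ^ (-c - 1) * (q * ‖x‖ ^ (q - 2)) := by
      rw [abs_mul, abs_mul, abs_neg, abs_of_pos hc0,
        abs_of_pos (Real.rpow_pos_of_pos (hbase x) _),
        abs_of_nonneg (by positivity : (0:ℝ) ≤ q * ‖x‖ ^ (q - 2))]
    rw [habs, hnp]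
    by_cases hx : x = 0
    · simp [hx, Real.zero_rpow (sub_ne_zero.mpr hq1.ne')]
    · have hB : ‖x‖ ^ (q - 2) * ‖x‖ = ‖x‖ ^ (q - 1) := by
        rw [← Real.rpow_add_one (norm_ne_zero_iff.mpr hx) (q - 2)]
        congr 1; ring
      linear_combination (c * q * (1 + ‖x‖ ^ q) ^ (-(n:ℝ) / p)) * hB
  refine ⟨hdiff, norm2, ?_⟩
  -- integral part
  haveI : Nonempty (Fin n) := ⟨⟨0, by omega⟩⟩
  haveI : Nontrivial (EuclideanSpace ℝ (Fin n)) := by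
    apply Module.nontrivial_of_finrank_pos (R := ℝ)
    rw [finrank_euclideanSpace_fin]; omega
  set G : ℝ → ℝ := fun r => (q * c * r ^ (q - 1) * (1 + r ^ q) ^ (-(n:ℝ) / p)) ^ p with hG
  have polar := MeasureTheory.integral_fun_norm_addHaar (E := EuclideanSpace ℝ (Fin n))
      (volume : Measure (EuclideanSpace ℝ (Fin n))) G
  rw [finrank_euclideanSpace_fin] at polar
  have hL : ∫ x : EuclideanSpace ℝ (Fin n), ‖gradient f x‖ ^ p = ∫ x : EuclideanSpace ℝ (Fin n), G ‖x‖ := by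
    congr 1; funext x; rw [hG, norm2 x]
  have hvol : (volume (Metric.ball (0 : EuclideanSpace ℝ (Fin n)) 1)).toReal
      = Real.pi ^ ((n:ℝ) / 2) / Real.Gamma ((n:ℝ) / 2 + 1) := by
    rw [EuclideanSpace.volume_ball]
    simp only [Fintype.card_fin, ENNReal.ofReal_one, one_pow, one_mul]
    rw [ENNReal.toReal_ofReal (by positivity)]
    have hs : Real.sqrt Real.pi ^ n = Real.pi ^ ((n:ℝ)/2) := by
      rw [Real.sqrt_eq_rpow, ← Real.rpow_natCast (Real.pi ^ ((1:ℝ)/2)) n,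
        ← Real.rpow_mul Real.pi_nonneg, mul_comm, mul_one_div]
    rw [hs]
  have hqp : (q - 1) * p = q := by
    rw [hq]; field_simp; ring
  have hIoi : ∫ r in Ioi (0:ℝ), r ^ (n - 1) • G r
      = (q ^ p * c ^ p) * ∫ ρ in Ioi (0:ℝ), ρ ^ ((n:ℝ) + q - 1) * (1 + ρ ^ q) ^ (-(n:ℝ)) := by
    rw [← MeasureTheory.integral_const_mul]
    apply setIntegral_congr_fun measurableSet_Ioi
    intro r hr
    have hr0 : (0:ℝ) < r := hr
    have hbr : (0:ℝ) < 1 + r ^ q := by positivity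
    have e1 : G r = q ^ p * c ^ p * (r ^ q * (1 + r ^ q) ^ (-(n:ℝ))) := by
      simp only [hG]
      rw [Real.mul_rpow (by positivity) (Real.rpow_nonneg hbr.le _),
        Real.mul_rpow (by positivity) (Real.rpow_nonneg hr0.le _),
        Real.mul_rpow hq0.le hc0.le,
        ← Real.rpow_mul hr0.le, hqp, ← Real.rpow_mul hbr.le,
        div_mul_cancel₀ _ hp0.ne']
      ring
    have e2 : (r: ℝ) ^ (n - 1) = r ^ ((n:ℝ) - 1) := by
      rw [← Real.rpow_natCast r (n - 1), Nat.cast_sub (by omega)]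
      norm_num
    simp only [smul_eq_mul]
    rw [e1, e2]
    rw [show (n:ℝ) + q - 1 = ((n:ℝ) - 1) + q by ring, Real.rpow_add hr0]
    ring
  rw [hL, polar, hIoi, measureReal_def, hvol, nsmul_eq_mul, smul_eq_mul]
  ring
end

section
/- Let n ≥ 3 be a natural number, (X,d) a metric space, o ∈ X, μ a Borel measure on X, and S : X → [0,∞) a measurable function such that the function Σ(r) := r^{2−n} ∫_{B(o,r)} S dμ is bounded on (0,∞). Then limsup_{λ→∞} ∫_X λ^{n−2}·(λ² + d(o,x)²)^{−(n−2)}·S(x) dμ(x) ≤ 2(n−2)·( ∫₀^∞ ρ^{n−1}·(1+ρ²)^{−(n−1)} dρ ) · limsup_{r→∞} Σ(r). -/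
open Set Filter MeasureTheory

namespace Stmt12Aux

/-- The weight function appearing after the layer-cake / coarea rewriting. -/
noncomputable def W (n : ℕ) (lam r : ℝ) : ℝ :=
  2 * ((n : ℝ) - 2) * lam ^ (n - 2) * r * ((lam ^ 2 + r ^ 2) ^ (n - 1))⁻¹

lemma W_nonneg (n : ℕ) (hn : 3 ≤ n) {lam : ℝ} (_hlam : 0 < lam) {r : ℝ} (hr : 0 ≤ r) :
    0 ≤ W n lam r := by
  have h2 : (0:ℝ) ≤ (n : ℝ) - 2 := by
    have : (3:ℝ) ≤ (n:ℝ) := by exact_mod_cast hn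
    linarith
  have : (0:ℝ) ≤ ((lam ^ 2 + r ^ 2) ^ (n - 1))⁻¹ := by positivity
  unfold W
  positivity

lemma continuous_W (n : ℕ) {lam : ℝ} (hlam : 0 < lam) : Continuous (W n lam) := by
  unfold W
  refine (continuous_const.mul continuous_id).mul (Continuous.inv₀ ?_ ?_)
  · exact (continuous_const.add (continuous_pow 2)).pow _
  · intro r; positivity

lemma hasDerivAt_W (n : ℕ) (hn : 3 ≤ n) {lam : ℝ} (hlam : 0 < lam) (r : ℝ) :
    HasDerivAt (fun s : ℝ => -(lam ^ (n - 2) * ((lam ^ 2 + s ^ 2) ^ (n - 2))⁻¹))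
      (W n lam r) r := by
  have hpos : (0:ℝ) < lam ^ 2 + r ^ 2 := by positivity
  have h1 : HasDerivAt (fun s : ℝ => lam ^ 2 + s ^ 2) (2 * r) r := by
    simpa using (hasDerivAt_pow 2 r).const_add (lam ^ 2)
  have h2 : HasDerivAt (fun s : ℝ => (lam ^ 2 + s ^ 2) ^ (n - 2))
      (((n - 2 : ℕ) : ℝ) * (lam ^ 2 + r ^ 2) ^ (n - 2 - 1) * (2 * r)) r := h1.pow (n - 2)
  have h3 := h2.inv (pow_ne_zero _ hpos.ne')
  have h4 : HasDerivAt (fun s : ℝ => -(lam ^ (n - 2) * ((lam ^ 2 + s ^ 2) ^ (n - 2))⁻¹))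
      (-(lam ^ (n - 2) * (-(((n - 2 : ℕ) : ℝ) * (lam ^ 2 + r ^ 2) ^ (n - 2 - 1) * (2 * r))
        / ((lam ^ 2 + r ^ 2) ^ (n - 2)) ^ 2))) r := (h3.const_mul (lam ^ (n - 2))).neg
  convert h4 using 1
  have hcast : ((n - 2 : ℕ) : ℝ) = (n : ℝ) - 2 := by
    rw [Nat.cast_sub (by omega)]; norm_num
  have hkey : ((lam ^ 2 + r ^ 2) ^ (n - 2)) ^ 2
      = (lam ^ 2 + r ^ 2) ^ (n - 2 - 1) * (lam ^ 2 + r ^ 2) ^ (n - 1) := by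
    rw [← pow_mul, ← pow_add]; congr 1; omega
  rw [W, hkey, hcast]
  have hne1 : (lam ^ 2 + r ^ 2) ^ (n - 2 - 1) ≠ 0 := by positivity
  have hne2 : (lam ^ 2 + r ^ 2) ^ (n - 1) ≠ 0 := by positivity
  field_simp

lemma tendsto_W_primitive (n : ℕ) (hn : 3 ≤ n) {lam : ℝ} (hlam : 0 < lam) :
    Tendsto (fun s : ℝ => -(lam ^ (n - 2) * ((lam ^ 2 + s ^ 2) ^ (n - 2))⁻¹))
      atTop (nhds 0) := by
  have h0 : Tendsto (fun s : ℝ => lam ^ 2 + s ^ 2) atTop atTop :=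
    tendsto_atTop_add_const_left atTop (lam ^ 2) (tendsto_pow_atTop two_ne_zero)
  have h1 : Tendsto (fun s : ℝ => (lam ^ 2 + s ^ 2) ^ (n - 2)) atTop atTop :=
    (tendsto_pow_atTop (by omega : n - 2 ≠ 0)).comp h0
  have h2 := h1.inv_tendsto_atTop
  have h3 := h2.const_mul (lam ^ (n - 2))
  simpa using h3.neg

lemma integrableOn_W (n : ℕ) (hn : 3 ≤ n) {lam : ℝ} (hlam : 0 < lam) {t : ℝ} (ht : 0 ≤ t) :
    IntegrableOn (W n lam) (Ioi t) := by
  refine integrableOn_Ioi_deriv_of_nonneg' (fun x _ => hasDerivAt_W n hn hlam x)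
    (fun x hx => W_nonneg n hn hlam (le_trans ht (le_of_lt hx))) (tendsto_W_primitive n hn hlam)

lemma integral_W (n : ℕ) (hn : 3 ≤ n) {lam : ℝ} (hlam : 0 < lam) {t : ℝ} (ht : 0 ≤ t) :
    ∫ r in Ioi t, W n lam r = lam ^ (n - 2) * ((lam ^ 2 + t ^ 2) ^ (n - 2))⁻¹ := by
  have := integral_Ioi_of_hasDerivAt_of_nonneg' (fun x _ => hasDerivAt_W n hn hlam x)
    (fun x hx => W_nonneg n hn hlam (le_trans ht (le_of_lt hx))) (tendsto_W_primitive n hn hlam)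
  simpa using this

lemma integrableOn_core (n : ℕ) (hn : 3 ≤ n) {lam : ℝ} (hlam : 0 < lam) :
    IntegrableOn (fun r : ℝ => r ^ (n - 1) * ((lam ^ 2 + r ^ 2) ^ (n - 1))⁻¹) (Ioi 0) := by
  set c := max lam 1 with hc
  have hc1 : (1:ℝ) ≤ c := le_max_right _ _
  have hc0 : (0:ℝ) < c := lt_of_lt_of_le one_pos hc1
  have hcont : Continuous fun r : ℝ => r ^ (n - 1) * ((lam ^ 2 + r ^ 2) ^ (n - 1))⁻¹ := by
    refine (continuous_pow _).mul (Continuous.inv₀ ?_ ?_)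
    · exact (continuous_const.add (continuous_pow 2)).pow _
    · intro r; positivity
  have h1 : IntegrableOn (fun r : ℝ => r ^ (n - 1) * ((lam ^ 2 + r ^ 2) ^ (n - 1))⁻¹)
      (Ioc 0 c) := hcont.integrableOn_Ioc
  have h2 : IntegrableOn (fun r : ℝ => r ^ (n - 1) * ((lam ^ 2 + r ^ 2) ^ (n - 1))⁻¹)
      (Ioi c) := by
    have hg : IntegrableOn (fun r : ℝ => r ^ (-2 : ℝ)) (Ioi c) :=
      integrableOn_Ioi_rpow_of_lt (by norm_num) hc0
    refine hg.mono' hcont.aestronglyMeasurable ?_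
    refine (ae_restrict_iff' measurableSet_Ioi).2 (ae_of_all _ fun r hr => ?_)
    have hr1 : (1:ℝ) ≤ r := le_trans hc1 (le_of_lt hr)
    have hr0 : (0:ℝ) < r := lt_of_lt_of_le one_pos hr1
    have hrp : (0:ℝ) < (lam ^ 2 + r ^ 2) ^ (n - 1) := by positivity
    have hb : r ^ (n - 1) * r ^ 2 ≤ (lam ^ 2 + r ^ 2) ^ (n - 1) := by
      calc r ^ (n - 1) * r ^ 2 = r ^ (n - 1 + 2) := (pow_add r (n - 1) 2).symm
        _ ≤ r ^ (2 * (n - 1)) := pow_le_pow_right₀ hr1 (by omega)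
        _ = (r ^ 2) ^ (n - 1) := pow_mul r 2 (n - 1)
        _ ≤ (lam ^ 2 + r ^ 2) ^ (n - 1) := by
            refine pow_le_pow_left₀ (by positivity) (by nlinarith [sq_nonneg lam]) _
    have hrw : r ^ (-2 : ℝ) = (r ^ 2)⁻¹ := by
      rw [show (-2:ℝ) = -((2:ℕ):ℝ) by norm_num, Real.rpow_neg hr0.le, Real.rpow_natCast]
    rw [Real.norm_eq_abs, abs_of_nonneg (by positivity), hrw]
    rw [mul_inv_le_iff₀ hrp, inv_mul_eq_div, le_div_iff₀ (by positivity)]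
    linarith [hb]
  have := h1.union h2
  rwa [Ioc_union_Ioi_eq_Ioi (le_of_lt hc0)] at this

lemma change_of_var (n : ℕ) (hn : 3 ≤ n) {lam : ℝ} (hlam : 0 < lam) :
    lam ^ (n - 2) * ∫ r in Ioi (0:ℝ), r ^ (n - 1) * ((lam ^ 2 + r ^ 2) ^ (n - 1))⁻¹
      = ∫ ρ in Ioi (0:ℝ), ρ ^ (n - 1) * ((1 + ρ ^ 2) ^ (n - 1))⁻¹ := by
  have h := integral_comp_mul_left_Ioi
    (fun r : ℝ => r ^ (n - 1) * ((lam ^ 2 + r ^ 2) ^ (n - 1))⁻¹) 0 hlam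
  rw [mul_zero] at h
  have hlamne : lam ≠ 0 := ne_of_gt hlam
  have hpt : ∀ ρ : ℝ, (lam * ρ) ^ (n - 1) * ((lam ^ 2 + (lam * ρ) ^ 2) ^ (n - 1))⁻¹
      = (lam ^ (n - 1) * (lam ^ (2 * (n - 1)))⁻¹) * (ρ ^ (n - 1) * ((1 + ρ ^ 2) ^ (n - 1))⁻¹) := by
    intro ρ
    have h1 : lam ^ 2 + (lam * ρ) ^ 2 = lam ^ 2 * (1 + ρ ^ 2) := by ring
    rw [h1, mul_pow, mul_pow, mul_inv, ← pow_mul]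
    ring
  rw [show (fun ρ : ℝ => (fun r : ℝ => r ^ (n - 1) * ((lam ^ 2 + r ^ 2) ^ (n - 1))⁻¹) (lam * ρ))
      = fun ρ : ℝ => (lam ^ (n - 1) * (lam ^ (2 * (n - 1)))⁻¹)
          * (ρ ^ (n - 1) * ((1 + ρ ^ 2) ^ (n - 1))⁻¹) from funext hpt,
    integral_const_mul, smul_eq_mul] at h
  -- h : c * I1 = lam⁻¹ * I2  where I2 = ∫ over Ioi 0 of core with lam
  have hpow : lam ^ (n - 2) * (lam * (lam ^ (n - 1) * (lam ^ (2 * (n - 1)))⁻¹)) = 1 := by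
    have h2 : lam ^ (n - 2) * (lam * lam ^ (n - 1)) = lam ^ (2 * (n - 1)) := by
      rw [← pow_succ' lam (n - 1), ← pow_add]; congr 1; omega
    have hne : lam ^ (2 * (n - 1)) ≠ 0 := pow_ne_zero _ hlamne
    field_simp
    linear_combination h2
  have h2 : (∫ r in Ioi (0:ℝ), r ^ (n - 1) * ((lam ^ 2 + r ^ 2) ^ (n - 1))⁻¹)
      = lam * ((lam ^ (n - 1) * (lam ^ (2 * (n - 1)))⁻¹)
          * ∫ ρ in Ioi (0:ℝ), ρ ^ (n - 1) * ((1 + ρ ^ 2) ^ (n - 1))⁻¹) := by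
    rw [h]; field_simp
  rw [h2]
  calc lam ^ (n - 2) * (lam * ((lam ^ (n - 1) * (lam ^ (2 * (n - 1)))⁻¹)
          * ∫ ρ in Ioi (0:ℝ), ρ ^ (n - 1) * ((1 + ρ ^ 2) ^ (n - 1))⁻¹))
      = (lam ^ (n - 2) * (lam * (lam ^ (n - 1) * (lam ^ (2 * (n - 1)))⁻¹)))
          * ∫ ρ in Ioi (0:ℝ), ρ ^ (n - 1) * ((1 + ρ ^ 2) ^ (n - 1))⁻¹ := by ring
    _ = ∫ ρ in Ioi (0:ℝ), ρ ^ (n - 1) * ((1 + ρ ^ 2) ^ (n - 1))⁻¹ := by rw [hpow, one_mul]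

end Stmt12Aux

open Stmt12Aux

set_option maxHeartbeats 2000000 in
/-- If `Σ(r) = r^{2-n} ∫_{B(o,r)} S dμ` is bounded on `(0,∞)`, then
`limsup_{λ→∞} ∫ λ^{n-2} (λ²+d(o,x)²)^{-(n-2)} S dμ
  ≤ 2(n-2) (∫₀^∞ ρ^{n-1}(1+ρ²)^{-(n-1)} dρ) · limsup_{r→∞} Σ(r)`. -/
theorem stmt_12 {X : Type*} [MetricSpace X] [MeasurableSpace X] [BorelSpace X]
    (μ : Measure X) (o : X) (n : ℕ) (hn : 3 ≤ n) (S : X → ℝ)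
    (hSmeas : Measurable S) (hSnonneg : ∀ x, 0 ≤ S x)
    (hSint : ∀ r > (0:ℝ), IntegrableOn S (Metric.ball o r) μ)
    (hbdd : ∃ M : ℝ, ∀ r > (0:ℝ),
      r ^ ((2 : ℝ) - n) * ∫ x in Metric.ball o r, S x ∂μ ≤ M) :
    limsup (fun lam : ℝ =>
        ∫ x, lam ^ (n - 2) * ((lam ^ 2 + dist o x ^ 2) ^ (n - 2))⁻¹ * S x ∂μ) atTop
      ≤ 2 * ((n : ℝ) - 2) * (∫ ρ in Ioi (0:ℝ), ρ ^ (n - 1) * ((1 + ρ ^ 2) ^ (n - 1))⁻¹) *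
          limsup (fun r : ℝ =>
            r ^ ((2 : ℝ) - n) * ∫ x in Metric.ball o r, S x ∂μ) atTop := by
  classical
  obtain ⟨M, hM⟩ := hbdd
  have hcast : ((n - 2 : ℕ) : ℝ) = (n : ℝ) - 2 := by
    rw [Nat.cast_sub (by omega)]; norm_num
  have hn2R : (0:ℝ) ≤ (n : ℝ) - 2 := by
    have : (3:ℝ) ≤ (n:ℝ) := by exact_mod_cast hn
    linarith
  have h2n : (0:ℝ) ≤ 2 * ((n:ℝ) - 2) := by linarith
  set A : ℝ → ℝ := fun r => ∫ x in Metric.ball o r, S x ∂μ with hA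
  set Sg : ℝ → ℝ := fun r : ℝ =>
      r ^ ((2 : ℝ) - n) * ∫ x in Metric.ball o r, S x ∂μ with hSg
  set I : ℝ := ∫ ρ in Ioi (0:ℝ), ρ ^ (n - 1) * ((1 + ρ ^ 2) ^ (n - 1))⁻¹ with hI
  set F : ℝ → ℝ := fun lam : ℝ =>
      ∫ x, lam ^ (n - 2) * ((lam ^ 2 + dist o x ^ 2) ^ (n - 2))⁻¹ * S x ∂μ with hF
  set L : ℝ := limsup Sg atTop with hL
  -- basic positivity facts
  have hA_nonneg : ∀ r : ℝ, 0 ≤ A r := fun r =>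
    setIntegral_nonneg measurableSet_ball fun x _ => hSnonneg x
  have hSg_nonneg : ∀ r : ℝ, 0 < r → 0 ≤ Sg r := fun r hr =>
    mul_nonneg (Real.rpow_nonneg hr.le _) (hA_nonneg r)
  have hM0 : 0 ≤ M := le_trans (hSg_nonneg 1 one_pos) (hM 1 one_pos)
  have hI0 : 0 ≤ I := by
    rw [hI]
    exact setIntegral_nonneg measurableSet_Ioi fun ρ hρ =>
      mul_nonneg (pow_nonneg (le_of_lt hρ) _) (by positivity)
  have hA_eq : ∀ r : ℝ, 0 < r → A r = Sg r * r ^ (n - 2) := by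
    intro r hr
    have h1 : r ^ ((2:ℝ) - (n:ℝ)) = (r ^ (n - 2 : ℕ))⁻¹ := by
      rw [show (2:ℝ) - (n:ℝ) = -(((n - 2 : ℕ) : ℝ)) by rw [hcast]; ring,
        Real.rpow_neg hr.le, Real.rpow_natCast]
    show A r = r ^ ((2:ℝ) - (n:ℝ)) * A r * r ^ (n - 2 : ℕ)
    rw [h1]
    have hrne : r ^ (n - 2 : ℕ) ≠ 0 := pow_ne_zero _ (ne_of_gt hr)
    field_simp
  -- the weighted measure
  set ν : Measure X := μ.withDensity (fun x => ENNReal.ofReal (S x)) with hν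
  have hν_ball : ∀ r : ℝ, ν (Metric.ball o r) = ENNReal.ofReal (A r) := by
    intro r
    rcases le_or_gt r 0 with h | h
    · have hb : Metric.ball o r = ∅ := Metric.ball_eq_empty.2 h
      show ν (Metric.ball o r) = ENNReal.ofReal (∫ x in Metric.ball o r, S x ∂μ)
      rw [hb]
      simp
    · show ν (Metric.ball o r) = ENNReal.ofReal (∫ x in Metric.ball o r, S x ∂μ)
      rw [hν, withDensity_apply _ measurableSet_ball]
      exact (ofReal_integral_eq_lintegral_ofReal (hSint r h)
        (ae_of_all _ fun x => hSnonneg x)).symm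
  haveI hσ : SigmaFinite ν := by
    refine ⟨⟨⟨fun k => Metric.ball o (k + 1), fun _ => mem_univ _, fun k => ?_, ?_⟩⟩⟩
    · rw [hν_ball]; exact ENNReal.ofReal_lt_top
    · rw [iUnion_eq_univ_iff]
      intro x
      obtain ⟨k, hk⟩ := exists_nat_gt (dist x o)
      exact ⟨k, by simp only [Metric.mem_ball]; push_cast; linarith⟩
  have hdist : Continuous fun x : X => dist o x := continuous_const.dist continuous_id
  have hSmeas' : Measurable fun x => ENNReal.ofReal (S x) := hSmeas.ennreal_ofReal
  -- key quantitative bound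
  have hkey : ∀ K R₀ : ℝ, 0 ≤ K → 0 < R₀ → (∀ r, R₀ ≤ r → Sg r ≤ K) →
      ∀ lam : ℝ, 0 < lam →
      F lam ≤ K * (2 * ((n:ℝ) - 2) * I)
        + (2 * ((n:ℝ) - 2) * M * R₀ ^ n) * (lam ^ n)⁻¹ := by
    intro K R₀ hK0 hR₀ hKb lam hlam
    have hlamne : lam ≠ 0 := ne_of_gt hlam
    have hker : Continuous fun x : X =>
        lam ^ (n - 2) * ((lam ^ 2 + dist o x ^ 2) ^ (n - 2))⁻¹ :=
      continuous_const.mul (Continuous.inv₀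
        ((continuous_const.add (hdist.pow 2)).pow _) (fun x => by positivity))
    have hker_nonneg : ∀ x : X,
        0 ≤ lam ^ (n - 2) * ((lam ^ 2 + dist o x ^ 2) ^ (n - 2))⁻¹ := fun x =>
      mul_nonneg (pow_nonneg hlam.le _) (inv_nonneg.2 (pow_nonneg (by positivity) _))
    have hWm : Measurable fun r : ℝ => ENNReal.ofReal (W n lam r) :=
      ((continuous_W n hlam).measurable).ennreal_ofReal
    -- Step 1 : Bochner integral to lintegral
    have step1 : F lam = (∫⁻ x, ENNReal.ofReal
        (lam ^ (n - 2) * ((lam ^ 2 + dist o x ^ 2) ^ (n - 2))⁻¹ * S x) ∂μ).toReal := by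
      exact integral_eq_lintegral_of_nonneg_ae
        (ae_of_all _ fun x => mul_nonneg (hker_nonneg x) (hSnonneg x))
        ((hker.measurable.mul hSmeas).aestronglyMeasurable)
    -- Step 2 : Tonelli / layer-cake
    have step2 : (∫⁻ x, ENNReal.ofReal
          (lam ^ (n - 2) * ((lam ^ 2 + dist o x ^ 2) ^ (n - 2))⁻¹ * S x) ∂μ)
        = ∫⁻ r in Ioi (0:ℝ), ENNReal.ofReal (W n lam r) * ν (Metric.ball o r) := by
      have e1 : ∀ x : X, ENNReal.ofReal
          (lam ^ (n - 2) * ((lam ^ 2 + dist o x ^ 2) ^ (n - 2))⁻¹ * S x)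
          = ENNReal.ofReal (S x)
            * ENNReal.ofReal (lam ^ (n - 2) * ((lam ^ 2 + dist o x ^ 2) ^ (n - 2))⁻¹) := by
        intro x
        rw [ENNReal.ofReal_mul (hker_nonneg x)]
        exact mul_comm _ _
      have e2 : (∫⁻ x, ENNReal.ofReal
            (lam ^ (n - 2) * ((lam ^ 2 + dist o x ^ 2) ^ (n - 2))⁻¹) ∂ν)
          = ∫⁻ x, ENNReal.ofReal (S x)
              * ENNReal.ofReal (lam ^ (n - 2) * ((lam ^ 2 + dist o x ^ 2) ^ (n - 2))⁻¹) ∂μ := by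
        rw [hν, lintegral_withDensity_eq_lintegral_mul μ hSmeas'
          (hker.measurable.ennreal_ofReal)]
        rfl
      have e3 : ∀ x : X, ENNReal.ofReal
            (lam ^ (n - 2) * ((lam ^ 2 + dist o x ^ 2) ^ (n - 2))⁻¹)
          = ∫⁻ r in Ioi (dist o x), ENNReal.ofReal (W n lam r) := by
        intro x
        rw [← integral_W n hn hlam (dist_nonneg (x := o) (y := x))]
        exact ofReal_integral_eq_lintegral_ofReal
          (integrableOn_W n hn hlam dist_nonneg)
          ((ae_restrict_iff' measurableSet_Ioi).2 (ae_of_all _ fun r hr =>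
            W_nonneg n hn hlam (le_trans dist_nonneg (le_of_lt hr))))
      have e4 : ∀ x : X, (∫⁻ r in Ioi (dist o x), ENNReal.ofReal (W n lam r))
          = ∫⁻ r in Ioi (0:ℝ),
              (Ioi (dist o x)).indicator (fun r => ENNReal.ofReal (W n lam r)) r := by
        intro x
        rw [lintegral_indicator measurableSet_Ioi,
          Measure.restrict_restrict measurableSet_Ioi,
          inter_eq_self_of_subset_left (Ioi_subset_Ioi dist_nonneg)]
      have hmeas_set : MeasurableSet {z : X × ℝ | dist o z.1 < z.2} :=
        (isOpen_lt (hdist.comp continuous_fst) continuous_snd).measurableSet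
      have huncurry : AEMeasurable (Function.uncurry fun (x : X) (r : ℝ) =>
          (Ioi (dist o x)).indicator (fun r => ENNReal.ofReal (W n lam r)) r)
          (ν.prod (volume.restrict (Ioi (0:ℝ)))) := by
        have heq : (Function.uncurry fun (x : X) (r : ℝ) =>
            (Ioi (dist o x)).indicator (fun r => ENNReal.ofReal (W n lam r)) r)
            = {z : X × ℝ | dist o z.1 < z.2}.indicator
                (fun z => ENNReal.ofReal (W n lam z.2)) := by
          funext z
          by_cases h : dist o z.1 < z.2
          · simp [Function.uncurry, indicator, h]
          · simp [Function.uncurry, indicator, h]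
        rw [heq]
        exact ((hWm.comp measurable_snd).indicator hmeas_set).aemeasurable
      have hswap := lintegral_lintegral_swap huncurry
      have e5 : ∀ r : ℝ, (∫⁻ x, (Ioi (dist o x)).indicator
            (fun r => ENNReal.ofReal (W n lam r)) r ∂ν)
          = ENNReal.ofReal (W n lam r) * ν (Metric.ball o r) := by
        intro r
        have hpt : ∀ x : X, (Ioi (dist o x)).indicator
              (fun r => ENNReal.ofReal (W n lam r)) r
            = (Metric.ball o r).indicator (fun _ => ENNReal.ofReal (W n lam r)) x := by
          intro x
          by_cases h : dist o x < r
          · simp [indicator, h, Metric.mem_ball, dist_comm]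
          · simp [indicator, h, Metric.mem_ball, dist_comm]
        rw [lintegral_congr hpt, lintegral_indicator measurableSet_ball,
          setLIntegral_const]
      calc (∫⁻ x, ENNReal.ofReal
            (lam ^ (n - 2) * ((lam ^ 2 + dist o x ^ 2) ^ (n - 2))⁻¹ * S x) ∂μ)
          = ∫⁻ x, ENNReal.ofReal (S x)
              * ENNReal.ofReal (lam ^ (n - 2) * ((lam ^ 2 + dist o x ^ 2) ^ (n - 2))⁻¹) ∂μ :=
            lintegral_congr e1
        _ = ∫⁻ x, ENNReal.ofReal
              (lam ^ (n - 2) * ((lam ^ 2 + dist o x ^ 2) ^ (n - 2))⁻¹) ∂ν := e2.symm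
        _ = ∫⁻ x, (∫⁻ r in Ioi (0:ℝ),
              (Ioi (dist o x)).indicator (fun r => ENNReal.ofReal (W n lam r)) r) ∂ν :=
            lintegral_congr fun x => by rw [e3 x, e4 x]
        _ = ∫⁻ r in Ioi (0:ℝ), (∫⁻ x, (Ioi (dist o x)).indicator
              (fun r => ENNReal.ofReal (W n lam r)) r ∂ν) := hswap
        _ = ∫⁻ r in Ioi (0:ℝ), ENNReal.ofReal (W n lam r) * ν (Metric.ball o r) :=
            lintegral_congr e5
    -- pow arithmetic
    have hpow_inv : lam ^ (n - 2) * (lam ^ (2 * (n - 1)))⁻¹ = (lam ^ n)⁻¹ := by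
      have h2 : lam ^ (n - 2) * lam ^ n = lam ^ (2 * (n - 1)) := by
        rw [← pow_add]; congr 1; omega
      have hne : lam ^ (2 * (n - 1)) ≠ 0 := pow_ne_zero _ hlamne
      have hnen : lam ^ n ≠ 0 := pow_ne_zero _ hlamne
      field_simp
      linear_combination h2
    -- Part 1 : small radii
    have part1 : (∫⁻ r in Ioc (0:ℝ) R₀, ENNReal.ofReal (W n lam r) * ν (Metric.ball o r))
        ≤ ENNReal.ofReal ((2 * ((n:ℝ) - 2) * M * R₀ ^ n) * (lam ^ n)⁻¹) := by
      set c₂ : ℝ := 2 * ((n:ℝ) - 2) * M * R₀ ^ (n - 1) * (lam ^ n)⁻¹ with hc₂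
      have hc₂0 : 0 ≤ c₂ :=
        mul_nonneg (mul_nonneg (mul_nonneg h2n hM0) (pow_nonneg hR₀.le _))
          (inv_nonneg.2 (pow_nonneg hlam.le _))
      have hb : ∀ r ∈ Ioc (0:ℝ) R₀,
          ENNReal.ofReal (W n lam r) * ν (Metric.ball o r) ≤ ENNReal.ofReal c₂ := by
        intro r hr
        have hr0 : (0:ℝ) < r := hr.1
        have hrR : r ≤ R₀ := hr.2
        have hWnn := W_nonneg n hn hlam hr0.le
        have h2 : A r ≤ M * r ^ (n - 2) := by
          rw [hA_eq r hr0]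
          exact mul_le_mul_of_nonneg_right (hM r hr0) (pow_nonneg hr0.le _)
        have key : W n lam r * (M * r ^ (n - 2))
            = 2 * ((n:ℝ) - 2) * M * (r ^ (n - 1) * ((lam ^ 2 + r ^ 2) ^ (n - 1))⁻¹)
                * lam ^ (n - 2) := by
          rw [show r ^ (n - 1) = r ^ (n - 2) * r from by rw [← pow_succ]; congr 1; omega]
          simp only [W]; ring
        have hbound : W n lam r * (M * r ^ (n - 2)) ≤ c₂ := by
          rw [key]
          calc 2 * ((n:ℝ) - 2) * M * (r ^ (n - 1) * ((lam ^ 2 + r ^ 2) ^ (n - 1))⁻¹)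
                * lam ^ (n - 2)
              ≤ 2 * ((n:ℝ) - 2) * M * (R₀ ^ (n - 1) * ((lam ^ 2) ^ (n - 1))⁻¹)
                * lam ^ (n - 2) := by
                have hle1 : r ^ (n - 1) ≤ R₀ ^ (n - 1) := pow_le_pow_left₀ hr0.le hrR _
                have hle2 : (lam ^ 2) ^ (n - 1) ≤ (lam ^ 2 + r ^ 2) ^ (n - 1) :=
                  pow_le_pow_left₀ (by positivity) (by nlinarith [sq_nonneg r]) _
                gcongr 2 * ((n:ℝ) - 2) * M * (?_ * (?_)⁻¹) * lam ^ (n - 2) <;>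
                  first
                  | exact hle1
                  | exact hle2
                  | exact mul_nonneg h2n hM0
                  | positivity
            _ = c₂ := by
                rw [hc₂, ← pow_mul, ← hpow_inv]; ring
        calc ENNReal.ofReal (W n lam r) * ν (Metric.ball o r)
            = ENNReal.ofReal (W n lam r) * ENNReal.ofReal (A r) := by rw [hν_ball r]
          _ ≤ ENNReal.ofReal (W n lam r) * ENNReal.ofReal (M * r ^ (n - 2)) := by
              exact mul_le_mul_right (ENNReal.ofReal_le_ofReal h2) _
          _ = ENNReal.ofReal (W n lam r * (M * r ^ (n - 2))) :=
              (ENNReal.ofReal_mul hWnn).symm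
          _ ≤ ENNReal.ofReal c₂ := ENNReal.ofReal_le_ofReal hbound
      calc (∫⁻ r in Ioc (0:ℝ) R₀, ENNReal.ofReal (W n lam r) * ν (Metric.ball o r))
          ≤ ∫⁻ _ in Ioc (0:ℝ) R₀, ENNReal.ofReal c₂ :=
            lintegral_mono_ae ((ae_restrict_iff' measurableSet_Ioc).2 (ae_of_all _ hb))
        _ = ENNReal.ofReal c₂ * volume (Ioc (0:ℝ) R₀) := setLIntegral_const _ _
        _ = ENNReal.ofReal c₂ * ENNReal.ofReal R₀ := by
            rw [Real.volume_Ioc, sub_zero]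
        _ = ENNReal.ofReal (c₂ * R₀) := (ENNReal.ofReal_mul hc₂0).symm
        _ = ENNReal.ofReal ((2 * ((n:ℝ) - 2) * M * R₀ ^ n) * (lam ^ n)⁻¹) := by
            congr 1
            rw [hc₂, show R₀ ^ n = R₀ ^ (n - 1) * R₀ from by rw [← pow_succ]; congr 1; omega]
            ring
    -- Part 2 : large radii
    have hfun : (fun r : ℝ => W n lam r * (K * r ^ (n - 2)))
        = fun r : ℝ => (2 * ((n:ℝ) - 2) * K * lam ^ (n - 2))
            * (r ^ (n - 1) * ((lam ^ 2 + r ^ 2) ^ (n - 1))⁻¹) := by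
      funext r
      rw [show r ^ (n - 1) = r ^ (n - 2) * r from by rw [← pow_succ]; congr 1; omega]
      simp only [W]; ring
    have part2 : (∫⁻ r in Ioi R₀, ENNReal.ofReal (W n lam r) * ν (Metric.ball o r))
        ≤ ENNReal.ofReal (K * (2 * ((n:ℝ) - 2) * I)) := by
      have hb : ∀ r ∈ Ioi R₀, ENNReal.ofReal (W n lam r) * ν (Metric.ball o r)
          ≤ ENNReal.ofReal (W n lam r * (K * r ^ (n - 2))) := by
        intro r hr
        have hr0 : (0:ℝ) < r := lt_trans hR₀ hr
        rw [hν_ball r, ← ENNReal.ofReal_mul (W_nonneg n hn hlam hr0.le)]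
        refine ENNReal.ofReal_le_ofReal
          (mul_le_mul_of_nonneg_left ?_ (W_nonneg n hn hlam hr0.le))
        rw [hA_eq r hr0]
        exact mul_le_mul_of_nonneg_right (hKb r (le_of_lt hr)) (pow_nonneg hr0.le _)
      have hint : IntegrableOn (fun r : ℝ => W n lam r * (K * r ^ (n - 2))) (Ioi 0) := by
        rw [hfun]
        exact (integrableOn_core n hn hlam).const_mul _
      have hval : (∫ r in Ioi (0:ℝ), W n lam r * (K * r ^ (n - 2)))
          = K * (2 * ((n:ℝ) - 2) * I) := by
        rw [hfun, integral_const_mul]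
        have hcv := change_of_var n hn hlam
        rw [← hI] at hcv
        calc (2 * ((n:ℝ) - 2) * K * lam ^ (n - 2))
              * ∫ r in Ioi (0:ℝ), r ^ (n - 1) * ((lam ^ 2 + r ^ 2) ^ (n - 1))⁻¹
            = (2 * ((n:ℝ) - 2) * K) * (lam ^ (n - 2)
              * ∫ r in Ioi (0:ℝ), r ^ (n - 1) * ((lam ^ 2 + r ^ 2) ^ (n - 1))⁻¹) := by ring
          _ = (2 * ((n:ℝ) - 2) * K) * I := by rw [hcv]
          _ = K * (2 * ((n:ℝ) - 2) * I) := by ring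
      calc (∫⁻ r in Ioi R₀, ENNReal.ofReal (W n lam r) * ν (Metric.ball o r))
          ≤ ∫⁻ r in Ioi R₀, ENNReal.ofReal (W n lam r * (K * r ^ (n - 2))) :=
            lintegral_mono_ae ((ae_restrict_iff' measurableSet_Ioi).2 (ae_of_all _ hb))
        _ ≤ ∫⁻ r in Ioi (0:ℝ), ENNReal.ofReal (W n lam r * (K * r ^ (n - 2))) :=
            lintegral_mono_set (Ioi_subset_Ioi hR₀.le)
        _ = ENNReal.ofReal (∫ r in Ioi (0:ℝ), W n lam r * (K * r ^ (n - 2))) := by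
            refine (ofReal_integral_eq_lintegral_ofReal hint ?_).symm
            exact (ae_restrict_iff' measurableSet_Ioi).2 (ae_of_all _ fun r hr =>
              mul_nonneg (W_nonneg n hn hlam (le_of_lt hr))
                (mul_nonneg hK0 (pow_nonneg (le_of_lt hr) _)))
        _ = ENNReal.ofReal (K * (2 * ((n:ℝ) - 2) * I)) := by rw [hval]
    -- combine
    have hKI0 : 0 ≤ K * (2 * ((n:ℝ) - 2) * I) := mul_nonneg hK0 (mul_nonneg h2n hI0)
    have hC0 : 0 ≤ (2 * ((n:ℝ) - 2) * M * R₀ ^ n) * (lam ^ n)⁻¹ :=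
      mul_nonneg (mul_nonneg (mul_nonneg h2n hM0) (pow_nonneg hR₀.le _))
        (inv_nonneg.2 (pow_nonneg hlam.le _))
    have step3 : (∫⁻ r in Ioi (0:ℝ), ENNReal.ofReal (W n lam r) * ν (Metric.ball o r))
        ≤ ENNReal.ofReal (K * (2 * ((n:ℝ) - 2) * I)
            + (2 * ((n:ℝ) - 2) * M * R₀ ^ n) * (lam ^ n)⁻¹) := by
      rw [← Ioc_union_Ioi_eq_Ioi hR₀.le,
        lintegral_union measurableSet_Ioi Ioc_disjoint_Ioi_same,
        ENNReal.ofReal_add hKI0 hC0]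
      calc (∫⁻ r in Ioc (0:ℝ) R₀, ENNReal.ofReal (W n lam r) * ν (Metric.ball o r))
            + ∫⁻ r in Ioi R₀, ENNReal.ofReal (W n lam r) * ν (Metric.ball o r)
          ≤ ENNReal.ofReal ((2 * ((n:ℝ) - 2) * M * R₀ ^ n) * (lam ^ n)⁻¹)
            + ENNReal.ofReal (K * (2 * ((n:ℝ) - 2) * I)) := add_le_add part1 part2
        _ = _ := add_comm _ _
    rw [step1, step2]
    exact ENNReal.toReal_le_of_le_ofReal (by linarith) step3
  -- limsup bookkeeping
  have hbddA : IsBoundedUnder (· ≤ ·) atTop Sg := by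
    refine ⟨M, ?_⟩
    rw [eventually_map]
    filter_upwards [eventually_gt_atTop 0] with r hr using hM r hr
  have hL0 : 0 ≤ L :=
    le_limsup_of_frequently_le
      (((eventually_gt_atTop 0).mono fun r hr => hSg_nonneg r hr).frequently) hbddA
  have hcob : IsCoboundedUnder (· ≤ ·) atTop F := by
    refine IsBoundedUnder.isCoboundedUnder_le ⟨0, ?_⟩
    rw [eventually_map]
    filter_upwards [eventually_gt_atTop 0] with lam hl
    exact integral_nonneg fun x => mul_nonneg
      (mul_nonneg (pow_nonneg hl.le _) (inv_nonneg.2 (pow_nonneg (by positivity) _)))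
      (hSnonneg x)
  have hup : ∀ ε : ℝ, 0 < ε → limsup F atTop ≤ 2 * ((n:ℝ) - 2) * I * L + ε := by
    intro ε hε
    set c₀ : ℝ := 2 * ((n:ℝ) - 2) * I with hc₀
    have hc₀0 : 0 ≤ c₀ := mul_nonneg h2n hI0
    set ε' : ℝ := ε / (2 * (c₀ + 1)) with hε'
    have hε'pos : 0 < ε' := div_pos hε (by linarith)
    obtain ⟨R₁, hR₁⟩ := eventually_atTop.1
      (eventually_lt_of_limsup_lt (show limsup Sg atTop < L + ε' by rw [← hL]; linarith) hbddA)
    set R₀ : ℝ := max R₁ 1 with hR₀def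
    have hR₀pos : (0:ℝ) < R₀ := lt_of_lt_of_le one_pos (le_max_right _ _)
    have hKb : ∀ r, R₀ ≤ r → Sg r ≤ L + ε' := fun r hr =>
      le_of_lt (hR₁ r (le_trans (le_max_left _ _) hr))
    have hK0 : 0 ≤ L + ε' := by linarith
    have hkey' := hkey (L + ε') R₀ hK0 hR₀pos hKb
    set C : ℝ := 2 * ((n:ℝ) - 2) * M * R₀ ^ n with hC
    have htend : Tendsto (fun lam : ℝ => C * (lam ^ n)⁻¹) atTop (nhds 0) := by
      have h1 : Tendsto (fun lam : ℝ => (lam ^ n)⁻¹) atTop (nhds 0) :=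
        (tendsto_pow_atTop (by omega : n ≠ 0)).inv_tendsto_atTop
      simpa using h1.const_mul C
    have hev2 : ∀ᶠ lam in atTop, C * (lam ^ n)⁻¹ < ε / 2 :=
      htend.eventually (gt_mem_nhds (half_pos hε))
    have hεc : (L + ε') * c₀ ≤ L * c₀ + ε / 2 := by
      have key : ε' * c₀ ≤ ε / 2 := by
        rw [hε', div_mul_eq_mul_div, div_le_div_iff₀ (by linarith) two_pos]
        nlinarith
      nlinarith
    have hfinal : ∀ᶠ lam in atTop, F lam ≤ 2 * ((n:ℝ) - 2) * I * L + ε := by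
      filter_upwards [hev2, eventually_gt_atTop 0] with lam h2 h1
      calc F lam ≤ (L + ε') * (2 * ((n:ℝ) - 2) * I) + C * (lam ^ n)⁻¹ := hkey' lam h1
        _ ≤ (L * c₀ + ε / 2) + ε / 2 := add_le_add (by rw [← hc₀]; exact hεc) h2.le
        _ = 2 * ((n:ℝ) - 2) * I * L + ε := by rw [hc₀]; ring
    exact limsup_le_of_le hcob hfinal
  by_contra hcon
  push_neg at hcon
  have h := hup ((limsup F atTop - 2 * ((n:ℝ) - 2) * I * L) / 2) (by linarith)
  linarith
end

section
/- For every natural number n ≥ 7, ((n−2)/n) · ( 2·n·ω_n/(48(n−2)(n−6)) ) · ( ∫₀^∞ ρ^{n+5}·(1+ρ²)^{−(n+1)} dρ ) · (2^{−n}·σ_n)^{−2/n} > σ_n^{−2/n} · ( 4/(n(n−2)) ) · ( σ_{n−1}·(n−2)²/(192·n·(n−1)) ) · ( ∫₀^∞ ρ^{n+1}·(1+ρ²)^{−n} dρ ), where ω_n = π^{n/2}/Γ(n/2+1), σ_{n−1} = 2π^{n/2}/Γ(n/2), σ_n = 2π^{(n+1)/2}/Γ((n+1)/2). Equivalently, 8·n·(n−1)·∫₀^∞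 ρ^{n+5}(1+ρ²)^{−(n+1)} dρ > (n−2)(n−6)·∫₀^∞ ρ^{n+1}(1+ρ²)^{−n} dρ, which reduces to 4(n−1)(n+2)(n+4) > (n−2)(n−4)(n−6). -/
open Set Filter MeasureTheory


lemma integrableOn_J {a b : ℕ} (h : a + 1 < 2 * b) :
    IntegrableOn (fun ρ : ℝ => ρ ^ a * ((1 + ρ ^ 2) ^ b)⁻¹) (Ioi 0) := by
  have hc : Continuous fun ρ : ℝ => ρ ^ a * ((1 + ρ ^ 2) ^ b)⁻¹ := by
    refine (continuous_pow a).mul (Continuous.inv₀ (by continuity) fun x => by positivity)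
  have h1 : IntegrableOn (fun ρ : ℝ => ρ ^ a * ((1 + ρ ^ 2) ^ b)⁻¹) (Ioc 0 1) :=
    (hc.integrableOn_Icc (a := 0) (b := 1)).mono_set Ioc_subset_Icc_self
  have h2 : IntegrableOn (fun ρ : ℝ => ρ ^ a * ((1 + ρ ^ 2) ^ b)⁻¹) (Ioi 1) := by
    have hint : IntegrableOn (fun x : ℝ => x ^ ((a : ℝ) - (2 * b : ℕ))) (Ioi 1) := by
      refine integrableOn_Ioi_rpow_of_lt ?_ one_pos
      have : ((a : ℝ) + 1 < (2 * b : ℕ)) := by exact_mod_cast h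
      linarith
    refine Integrable.mono hint hc.aestronglyMeasurable.restrict ?_
    rw [ae_restrict_iff' measurableSet_Ioi]
    refine ae_of_all _ fun x hx => ?_
    have hx1 : (1:ℝ) < x := hx
    have hx0 : (0:ℝ) < x := by linarith
    have hpos : (0:ℝ) < 1 + x ^ 2 := by positivity
    have hval : x ^ ((a : ℝ) - (2 * b : ℕ)) = x ^ a * (x ^ (2 * b))⁻¹ := by
      rw [Real.rpow_sub hx0, Real.rpow_natCast, Real.rpow_natCast, div_eq_mul_inv]
    rw [Real.norm_eq_abs, Real.norm_eq_abs, abs_of_nonneg (by positivity),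
      abs_of_nonneg (by positivity : (0:ℝ) ≤ x ^ ((a : ℝ) - (2 * b : ℕ))), hval]
    have hle : x ^ (2 * b) ≤ (1 + x ^ 2) ^ b := by
      rw [pow_mul]
      exact pow_le_pow_left₀ (by positivity) (by nlinarith) b
    exact mul_le_mul_of_nonneg_left (by
      exact inv_anti₀ (by positivity) hle) (by positivity)
  rw [← Ioc_union_Ioi_eq_Ioi (zero_le_one (α := ℝ))]
  exact h1.union h2

lemma tendsto_J {c b : ℕ} (h : c < 2 * b) :
    Tendsto (fun ρ : ℝ => ρ ^ c * ((1 + ρ ^ 2) ^ b)⁻¹) atTop (nhds 0) := by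
  have hneg : (0:ℝ) < -((c : ℝ) - (2 * b : ℕ)) := by
    have : ((c : ℝ) < (2 * b : ℕ)) := by exact_mod_cast h
    linarith
  have hrp : Tendsto (fun x : ℝ => x ^ ((c:ℝ) - (2*b:ℕ))) atTop (nhds 0) := by
    simpa using tendsto_rpow_neg_atTop hneg
  refine squeeze_zero' ?_ ?_ hrp
  · filter_upwards [eventually_gt_atTop (0:ℝ)] with x hx
    positivity
  · filter_upwards [eventually_gt_atTop (1:ℝ)] with x hx1
    have hx0 : (0:ℝ) < x := by linarith
    have hval : x ^ ((c : ℝ) - (2 * b : ℕ)) = x ^ c * (x ^ (2 * b))⁻¹ := by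
      rw [Real.rpow_sub hx0, Real.rpow_natCast, Real.rpow_natCast, div_eq_mul_inv]
    rw [hval]
    have hle : x ^ (2 * b) ≤ (1 + x ^ 2) ^ b := by
      rw [pow_mul]
      exact pow_le_pow_left₀ (by positivity) (by nlinarith) b
    exact mul_le_mul_of_nonneg_left (inv_anti₀ (by positivity) hle) (by positivity)

lemma J_rec {a b : ℕ} (h : a + 1 < 2 * b) :
    ((a:ℝ) + 1) * (∫ ρ in Ioi (0:ℝ), ρ ^ a * ((1 + ρ ^ 2) ^ b)⁻¹)
      = 2 * b * ∫ ρ in Ioi (0:ℝ), ρ ^ (a + 2) * ((1 + ρ ^ 2) ^ (b + 1))⁻¹ := by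
  obtain ⟨k, rfl⟩ : ∃ k, b = k + 1 := ⟨b - 1, by omega⟩
  set f : ℝ → ℝ := fun x => x ^ (a + 1) * ((1 + x ^ 2) ^ (k + 1))⁻¹ with hf
  set f' : ℝ → ℝ := fun x =>
    ((a:ℝ) + 1) * (x ^ a * ((1 + x ^ 2) ^ (k + 1))⁻¹)
      - 2 * ((k:ℝ) + 1) * (x ^ (a + 2) * ((1 + x ^ 2) ^ (k + 1 + 1))⁻¹) with hf'
  have hg1 := integrableOn_J (a := a) (b := k + 1) h
  have hg2 := integrableOn_J (a := a + 2) (b := k + 1 + 1) (by omega)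
  have hderiv : ∀ x ∈ Ici (0:ℝ), HasDerivAt f (f' x) x := by
    intro x _
    have hp : (0:ℝ) < 1 + x ^ 2 := by positivity
    have h1 : HasDerivAt (fun y : ℝ => 1 + y ^ 2) (2 * x) x := by
      simpa using (hasDerivAt_pow 2 x).const_add 1
    have h2 : HasDerivAt (fun y : ℝ => (1 + y ^ 2) ^ (k + 1))
        (((k:ℝ) + 1) * (1 + x ^ 2) ^ k * (2 * x)) x := by
      have := h1.pow (k + 1)
      exact this.congr_deriv (by simp)
    have h3 := h2.inv (by positivity)
    have h4 := (hasDerivAt_pow (a + 1) x).mul h3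
    convert (show HasDerivAt f _ x from h4) using 1

    rw [hf']
    simp only [Pi.inv_apply, Nat.add_sub_cancel, Nat.cast_add, Nat.cast_one]
    field_simp
    ring
  have hint : IntegrableOn f' (Ioi 0) := (hg1.const_mul _).sub (hg2.const_mul _)
  have htend : Tendsto f atTop (nhds 0) := tendsto_J (by omega)
  have key := integral_Ioi_of_hasDerivAt_of_tendsto' hderiv hint htend
  have hf0 : f 0 = 0 := by simp [hf]
  rw [hf0, sub_zero] at key
  have hsplit : ∫ x in Ioi (0:ℝ), f' x
      = ((a:ℝ) + 1) * (∫ ρ in Ioi (0:ℝ), ρ ^ a * ((1 + ρ ^ 2) ^ (k + 1))⁻¹)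
        - 2 * ((k:ℝ) + 1) * ∫ ρ in Ioi (0:ℝ), ρ ^ (a + 2) * ((1 + ρ ^ 2) ^ (k + 1 + 1))⁻¹ := by
    rw [hf']
    rw [integral_sub (hg1.const_mul _) (hg2.const_mul _), integral_const_mul, integral_const_mul]
  rw [hsplit] at key
  push_cast
  linarith

lemma J_split {a b : ℕ} (h : a + 3 < 2 * b) :
    (∫ ρ in Ioi (0:ℝ), ρ ^ (a + 2) * ((1 + ρ ^ 2) ^ b)⁻¹)
      + ∫ ρ in Ioi (0:ℝ), ρ ^ a * ((1 + ρ ^ 2) ^ b)⁻¹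
      = ∫ ρ in Ioi (0:ℝ), ρ ^ a * ((1 + ρ ^ 2) ^ (b - 1))⁻¹ := by
  obtain ⟨k, rfl⟩ : ∃ k, b = k + 1 := ⟨b - 1, by omega⟩
  rw [← integral_add (integrableOn_J (by omega)) (integrableOn_J (by omega))]
  refine setIntegral_congr_fun measurableSet_Ioi fun x hx => ?_
  have hp : (0:ℝ) < 1 + x ^ 2 := by positivity
  simp only [Nat.add_sub_cancel]
  field_simp
  ring

lemma J_pos {a b : ℕ} (h : a + 1 < 2 * b) :
    0 < ∫ ρ in Ioi (0:ℝ), ρ ^ a * ((1 + ρ ^ 2) ^ b)⁻¹ := by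
  rw [setIntegral_pos_iff_support_of_nonneg_ae ?_ (integrableOn_J h)]
  · have hsub : Ioi (0:ℝ) ⊆ Function.support fun ρ : ℝ => ρ ^ a * ((1 + ρ ^ 2) ^ b)⁻¹ := by
      intro x hx
      have hx0 : (0:ℝ) < x := hx
      have : (0:ℝ) < x ^ a * ((1 + x ^ 2) ^ b)⁻¹ := by positivity
      exact ne_of_gt this
    rw [Set.inter_eq_right.mpr hsub]
    simp [Real.volume_Ioi]
  · filter_upwards [ae_restrict_mem measurableSet_Ioi] with x hx
    have hx0 : (0:ℝ) < x := hx
    positivity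

lemma coeff_aux (P A G N I1 I2 : ℝ) (hP : 0 < P) (hA : 0 < A) (hG : 0 < G) (hN : 7 ≤ N)
    (h : 8 * N * (N - 1) * I1 > (N - 2) * (N - 6) * I2) :
    (N - 2) / N * (2 * N * (A / (N / 2 * G)) / (48 * (N - 2) * (N - 6))) * I1 * (4 * P)
      > P * (4 / (N * (N - 2))) * (2 * A / G * (N - 2) ^ 2 / (192 * N * (N - 1))) * I2 := by
  rw [gt_iff_lt, ← sub_pos]
  have hN0 : N ≠ 0 := by linarith
  have hG0 : G ≠ 0 := ne_of_gt hG
  have key : (N - 2) / N * (2 * N * (A / (N / 2 * G)) / (48 * (N - 2) * (N - 6))) * I1 * (4 * P)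
      - P * (4 / (N * (N - 2))) * (2 * A / G * (N - 2) ^ 2 / (192 * N * (N - 1))) * I2
      = P * A / G * (8 * N * (N - 1) * I1 - (N - 2) * (N - 6) * I2)
          / (24 * N ^ 2 * (N - 1) * (N - 6)) := by
    have h2 : N - 2 ≠ 0 := by intro h'; nlinarith
    have h6 : N - 6 ≠ 0 := by intro h'; nlinarith
    have h1 : N - 1 ≠ 0 := by intro h'; nlinarith
    field_simp
    ring
  rw [key]
  have hD : 0 < 8 * N * (N - 1) * I1 - (N - 2) * (N - 6) * I2 := by linarith
  have hE : 0 < 24 * N ^ 2 * (N - 1) * (N - 6) := by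
    have h1 : (0:ℝ) < 24 * N ^ 2 := by nlinarith
    exact mul_pos (mul_pos h1 (by linarith)) (by linarith)
  exact div_pos (mul_pos (div_pos (mul_pos hP hA) hG) hD) hE

/-- The strict inequality `(1-2/n) c_n A_n^{-2/n} > K(n,2)² b_n` between the
`λ⁴`-coefficients in the proof of Theorem C, its equivalent integral form, and the
arithmetic inequality it reduces to. -/
theorem stmt_17 (n : ℕ) (hn : 7 ≤ n) :
    (((n : ℝ) - 2) / (n : ℝ)) *
        (2 * (n : ℝ) * (Real.pi ^ ((n : ℝ) / 2) / Real.Gamma ((n : ℝ) / 2 + 1)) /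
          (48 * ((n : ℝ) - 2) * ((n : ℝ) - 6))) *
        (∫ ρ in Ioi (0:ℝ), ρ ^ (n + 5) * ((1 + ρ ^ 2) ^ (n + 1))⁻¹) *
        (2 ^ (-(n : ℝ)) *
          (2 * Real.pi ^ (((n : ℝ) + 1) / 2) / Real.Gamma (((n : ℝ) + 1) / 2)))
            ^ (-2 / (n : ℝ))
      > (2 * Real.pi ^ (((n : ℝ) + 1) / 2) / Real.Gamma (((n : ℝ) + 1) / 2)) ^ (-2 / (n : ℝ)) *
          (4 / ((n : ℝ) * ((n : ℝ) - 2))) *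
          ((2 * Real.pi ^ ((n : ℝ) / 2) / Real.Gamma ((n : ℝ) / 2)) * ((n : ℝ) - 2) ^ 2 /
            (192 * (n : ℝ) * ((n : ℝ) - 1))) *
          (∫ ρ in Ioi (0:ℝ), ρ ^ (n + 1) * ((1 + ρ ^ 2) ^ n)⁻¹) ∧
    8 * (n : ℝ) * ((n : ℝ) - 1) *
        (∫ ρ in Ioi (0:ℝ), ρ ^ (n + 5) * ((1 + ρ ^ 2) ^ (n + 1))⁻¹)
      > ((n : ℝ) - 2) * ((n : ℝ) - 6) *
        (∫ ρ in Ioi (0:ℝ), ρ ^ (n + 1) * ((1 + ρ ^ 2) ^ n)⁻¹) ∧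
    4 * ((n : ℝ) - 1) * ((n : ℝ) + 2) * ((n : ℝ) + 4)
      > ((n : ℝ) - 2) * ((n : ℝ) - 4) * ((n : ℝ) - 6) := by
  have h7 : (7:ℝ) ≤ (n:ℝ) := by exact_mod_cast hn
  -- the three recurrence facts
  have rec1 := J_rec (a := n + 1) (b := n - 1) (by omega)
  have rec2 := J_rec (a := n + 3) (b := n) (by omega)
  have spl := J_split (a := n + 1) (b := n) (by omega)
  rw [show n - 1 + 1 = n from by omega] at rec1
  rw [show n + 1 + 2 = n + 3 from rfl] at rec1 spl
  rw [show n + 3 + 2 = n + 5 from rfl] at rec2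
  push_cast [Nat.cast_sub (show 1 ≤ n by omega)] at rec1 rec2 spl
  have hI2 : 0 < ∫ ρ in Ioi (0:ℝ), ρ ^ (n + 1) * ((1 + ρ ^ 2) ^ n)⁻¹ := J_pos (by omega)
  set N : ℝ := (n : ℝ) with hN
  set I1 : ℝ := ∫ ρ in Ioi (0:ℝ), ρ ^ (n + 5) * ((1 + ρ ^ 2) ^ (n + 1))⁻¹ with hI1def
  set I2 : ℝ := ∫ ρ in Ioi (0:ℝ), ρ ^ (n + 1) * ((1 + ρ ^ 2) ^ n)⁻¹ with hI2def
  set J3 : ℝ := ∫ ρ in Ioi (0:ℝ), ρ ^ (n + 3) * ((1 + ρ ^ 2) ^ n)⁻¹ with hJ3def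
  set J1 : ℝ := ∫ ρ in Ioi (0:ℝ), ρ ^ (n + 1) * ((1 + ρ ^ 2) ^ (n - 1))⁻¹ with hJ1def
  -- rec1 : (N+1+1) * J1 = 2*(N-1) * J3
  -- rec2 : (N+3+1) * J3 = 2*N * I1
  -- spl  : J3 + I2 = J1
  have key : 2 * N * (N - 4) * I1 = (N + 2) * (N + 4) * I2 := by
    linear_combination (-(N + 4)) * rec1 - (N + 4) * (N + 2) * spl - (N - 4) * rec2
  have ineq3 : 4 * (N - 1) * (N + 2) * (N + 4) > (N - 2) * (N - 4) * (N - 6) := by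
    nlinarith [mul_nonneg (show (0:ℝ) ≤ N - 7 by linarith) (show (0:ℝ) ≤ N by linarith),
      mul_nonneg (mul_nonneg (show (0:ℝ) ≤ N - 7 by linarith) (show (0:ℝ) ≤ N by linarith))
        (show (0:ℝ) ≤ N by linarith)]
  have ineq2 : 8 * N * (N - 1) * I1 > (N - 2) * (N - 6) * I2 := by
    have h5 : (N - 4) * ((N - 2) * (N - 6) * I2) < (N - 4) * (8 * N * (N - 1) * I1) := by
      nlinarith [mul_lt_mul_of_pos_right ineq3 hI2]
    exact lt_of_mul_lt_mul_left h5 (by linarith)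
  refine ⟨?_, ineq2, ineq3⟩
  -- first inequality
  have hGhalf : 0 < Real.Gamma (N / 2) := Real.Gamma_pos_of_pos (by linarith)
  have hS : 0 < 2 * Real.pi ^ ((N + 1) / 2) / Real.Gamma ((N + 1) / 2) := by
    have hg := Real.Gamma_pos_of_pos (show 0 < (N + 1) / 2 by linarith)
    have hp : (0:ℝ) < Real.pi ^ ((N + 1) / 2) := Real.rpow_pos_of_pos Real.pi_pos _
    positivity
  have hGamma1 : Real.Gamma (N / 2 + 1) = N / 2 * Real.Gamma (N / 2) :=
    Real.Gamma_add_one (ne_of_gt (show (0:ℝ) < N / 2 by linarith))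
  have hPow : ((2:ℝ) ^ (-N) *
      (2 * Real.pi ^ ((N + 1) / 2) / Real.Gamma ((N + 1) / 2))) ^ (-2 / N)
      = 4 * (2 * Real.pi ^ ((N + 1) / 2) / Real.Gamma ((N + 1) / 2)) ^ (-2 / N) := by
    rw [Real.mul_rpow (by positivity) hS.le]
    congr 1
    rw [← Real.rpow_mul (by norm_num : (0:ℝ) ≤ 2)]
    rw [show -N * (-2 / N) = ((2:ℕ):ℝ) by push_cast; field_simp]
    rw [Real.rpow_natCast]
    norm_num
  rw [hGamma1, hPow]
  exact coeff_aux _ _ _ _ _ _ (Real.rpow_pos_of_pos hS _)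
    (Real.rpow_pos_of_pos Real.pi_pos _) hGhalf h7 ineq2
end
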